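/- arXiv:2102.09129 — 6 statements merged into one kernel-verified Lean document; each statement's English description precedes it below -/
import Mathlib

section
/- Let k, m be positive integers, p a prime, and a₁, …, a_m integers. If for each i ∈ {1,…,m} the congruence x² ≡ aᵢ (mod p^k) has no solution, then the congruence ∏_{i=1}^m (x² − aᵢ) ≡ 0 (mod p^{km}) has no solution. -/
/-- If none of x² ≡ aᵢ (mod p^k) is solvable, then
∏ (x² − aᵢ) ≡ 0 (mod p^{km}) is not solvable. -/
theorem stmt_3 (k m : ℕ) (hk : 0 < k) (hm : 0 < m) (p : ℕ) (hp : p.Prime)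
    (a : Fin m → ℤ)
    (h : ∀ i, ¬ ∃ x : ℤ, (p : ℤ) ^ k ∣ x ^ 2 - a i) :
    ¬ ∃ x : ℤ, (p : ℤ) ^ (k * m) ∣ ∏ i, (x ^ 2 - a i) := by
  rintro ⟨x, hx⟩
  set n : Fin m → ℕ := fun i => (x ^ 2 - a i).natAbs with hn
  have hne : ∀ i, n i ≠ 0 := by
    intro i hi
    have h0 : x ^ 2 - a i = 0 := Int.natAbs_eq_zero.mp hi
    exact h i ⟨x, h0 ▸ dvd_zero _⟩
  have hdvd : p ^ (k * m) ∣ ∏ i, n i := by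
    have h1 := Int.natAbs_dvd_natAbs.mpr hx
    rw [Int.natAbs_pow, Int.natAbs_natCast] at h1
    calc p ^ (k * m) ∣ (∏ i, (x ^ 2 - a i)).natAbs := h1
      _ = ∏ i, n i := map_prod Int.natAbsHom _ Finset.univ
  have hprodne : (∏ i, n i) ≠ 0 := Finset.prod_ne_zero_iff.mpr fun i _ => hne i
  have hle : k * m ≤ (∏ i, n i).factorization p :=
    (Nat.Prime.pow_dvd_iff_le_factorization hp hprodne).mp hdvd
  rw [Nat.factorization_prod (fun i _ => hne i)] at hle
  simp only [Finset.sum_apply'] at hle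
  have hex : ∃ i : Fin m, k ≤ (n i).factorization p := by
    by_contra hcon
    push_neg at hcon
    have : (∑ i : Fin m, (n i).factorization p) ≤ ∑ _i : Fin m, (k - 1) :=
      Finset.sum_le_sum fun i _ => Nat.le_sub_one_of_lt (hcon i)
    have hlt : (∑ i : Fin m, (n i).factorization p) < k * m := by
      calc (∑ i : Fin m, (n i).factorization p) ≤ m * (k - 1) := by
            simpa [Finset.sum_const, Finset.card_univ, mul_comm] using this
        _ < k * m := by
            have h2 : m * (k - 1) < m * k :=
              Nat.mul_lt_mul_of_pos_left (Nat.sub_lt hk one_pos) hm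
            rw [mul_comm k m]; exact h2
    exact absurd hle hlt.not_ge
  obtain ⟨i, hi⟩ := hex
  have hpd : p ^ k ∣ n i := (Nat.Prime.pow_dvd_iff_le_factorization hp (hne i)).mpr hi
  have : (p : ℤ) ^ k ∣ x ^ 2 - a i := by
    have := Int.natCast_dvd_natCast.mpr hpd
    rw [hn] at this
    push_cast at this
    exact (Int.dvd_natAbs (a := (p:ℤ)^k)).mp (by rwa [Int.abs_eq_natAbs] at this)
  exact h i ⟨x, this⟩
end

section
/- Let k ≥ 3 and let a₁, …, a_k be distinct nonzero square-free integers such that for each m with 1 ≤ m ≤ k and every subset T ⊆ {1,…,m−1}, one has a_m > rad(∏_{j ∈ T} a_j). Then for every nonempty subset S ⊆ {1,…,k}, the product ∏_{j ∈ S} a_j is not a perfect square. -/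
/-- `IsRad m d` means `d` is the square-free part of `m`: `d` is square-free and
`m = d * k²` for some integer `k`. -/
def IsRad (m d : ℤ) : Prop := Squarefree d ∧ ∃ k : ℤ, m = d * k ^ 2

/-- If a₁,…,a_k (k ≥ 3) are distinct nonzero square-free integers such that each
a_m exceeds the square-free part of any sub-product of a₁,…,a_{m−1}, then no nonempty
sub-product of the a_j is a perfect square. -/
theorem stmt_4 (k : ℕ) (hk : 3 ≤ k) (a : Fin k → ℤ)
    (hinj : Function.Injective a)
    (hne0 : ∀ i, a i ≠ 0) (hsf : ∀ i, Squarefree (a i))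
    (hgt : ∀ m : Fin k, ∀ T : Finset (Fin k), (∀ j ∈ T, j < m) →
      ∀ d : ℤ, IsRad (∏ j ∈ T, a j) d → d < a m) :
    ∀ S : Finset (Fin k), S.Nonempty → ¬ ∃ c : ℤ, ∏ j ∈ S, a j = c ^ 2 := by
  rintro S hS ⟨c, hc⟩
  set m := S.max' hS with hm
  have hmS : m ∈ S := S.max'_mem hS
  set T := S.erase m with hT
  have hTlt : ∀ j ∈ T, j < m := by
    intro j hj
    rcases Finset.mem_erase.mp hj with ⟨hne, hjS⟩
    exact lt_of_le_of_ne (S.le_max' j hjS) hne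
  have hprod : a m * ∏ j ∈ T, a j = c ^ 2 := by
    rw [hT, Finset.mul_prod_erase _ _ hmS]; exact hc
  have hdvd : a m ∣ c := (hsf m).isRadical 2 c ⟨∏ j ∈ T, a j, hprod.symm⟩
  obtain ⟨e, he⟩ := hdvd
  have hP : ∏ j ∈ T, a j = a m * e ^ 2 := by
    have : a m * ∏ j ∈ T, a j = a m * (a m * e ^ 2) := by
      rw [hprod, he]; ring
    exact mul_left_cancel₀ (hne0 m) this
  exact lt_irrefl (a m) (hgt m T hTlt (a m) ⟨hsf m, e, hP⟩)
end

section
/- For every positive integer m, the congruence (x² − 15)(x² − 17)(x² − 255)(x² − 2161) ≡ 0 (mod m) has an integer solution. -/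
lemma of_isSquare (p : ℕ) [NeZero p] (a : ℤ) (h : IsSquare ((a : ZMod p))) :
    ∃ x : ℤ, (p:ℤ) ∣ x ^ 2 - a := by
  obtain ⟨r, hr⟩ := h
  refine ⟨(r.val : ℤ), ?_⟩
  rw [← ZMod.intCast_zmod_eq_zero_iff_dvd]
  push_cast
  simp [ZMod.natCast_val, ZMod.cast_id, ← hr, sq]

lemma nonsq_mul (p : ℕ) [Fact p.Prime] (hp2 : p ≠ 2) (a b : ZMod p)
    (ha : a ≠ 0) (hb : b ≠ 0)
    (hA : ¬ IsSquare a) (hB : ¬ IsSquare b) : IsSquare (a * b) := by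
  have h2 : ringChar (ZMod p) ≠ 2 := by
    rw [ZMod.ringChar_zmod_n]; exact hp2
  have := quadraticChar_neg_one_iff_not_isSquare.mpr hA
  have := quadraticChar_neg_one_iff_not_isSquare.mpr hB
  have hmul : quadraticChar (ZMod p) (a*b) = 1 := by
    rw [map_mul]; simp_all
  exact (quadraticChar_one_iff_isSquare (mul_ne_zero ha hb)).mp hmul

lemma lift_odd (p : ℕ) (hp : p.Prime) (hodd : p ≠ 2) (a : ℤ) (ha : ¬ (p:ℤ) ∣ a)
    (hbase : ∃ x : ℤ, (p:ℤ) ∣ x ^ 2 - a) :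
    ∀ n : ℕ, ∃ x : ℤ, (p:ℤ) ^ (n+1) ∣ x ^ 2 - a := by
  intro n
  induction n with
  | zero => simpa using hbase
  | succ n ih =>
    obtain ⟨x, c, hc⟩ := ih
    have hpI : Prime (p:ℤ) := Nat.prime_iff_prime_int.mp hp
    have hpx : ¬ (p:ℤ) ∣ x := by
      intro h
      apply ha
      have h1 : (p:ℤ) ∣ x ^ 2 := by exact Dvd.dvd.pow h (by norm_num)
      have h2 : (p:ℤ) ∣ x ^ 2 - a := hc ▸ Dvd.dvd.mul_right (dvd_pow_self _ (Nat.succ_ne_zero n)) c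
      simpa using dvd_sub h1 h2
    have hp2 : ¬ (p:ℤ) ∣ 2 := by
      intro h
      rw [show ((2:ℤ)) = ((2:ℕ):ℤ) from rfl, Int.natCast_dvd_natCast] at h
      exact hodd ((Nat.prime_dvd_prime_iff_eq hp Nat.prime_two).mp h)
    have hco : IsCoprime ((p:ℤ)) (2*x) := by
      rw [Prime.coprime_iff_not_dvd hpI]
      exact fun h => (hpI.dvd_mul.mp h).elim hp2 hpx
    obtain ⟨u, v, huv⟩ := hco
    refine ⟨x - c*v*(p:ℤ)^(n+1), c*u + (p:ℤ)^n * c^2 * v^2, ?_⟩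
    linear_combination hc - (p:ℤ)^(n+1)*c*huv

lemma lift_two : ∀ n : ℕ, ∃ x : ℤ, Odd x ∧ (2:ℤ) ^ (n+3) ∣ x ^ 2 - 2161 := by
  intro n
  induction n with
  | zero => exact ⟨1, ⟨0, by norm_num⟩, by norm_num⟩
  | succ n ih =>
    obtain ⟨x, hodd, c, hc⟩ := ih
    rcases Int.even_or_odd c with ⟨d, hd⟩ | hcodd
    · exact ⟨x, hodd, d, by rw [hc, hd]; ring⟩
    · obtain ⟨e, he⟩ := hodd.add_odd hcodd
      refine ⟨x + 2^(n+2), hodd.add_even (by exact ⟨2^(n+1), by ring⟩), e + 2^n, ?_⟩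
      linear_combination hc + 2^(n+3)*he

lemma root_factor (m : ℕ) (a : ℤ) (hmem : a = 15 ∨ a = 17 ∨ a = 255 ∨ a = 2161)
    (h : ∃ x : ℤ, (m:ℤ) ∣ x ^ 2 - a) :
    ∃ x : ℤ, (m : ℤ) ∣ (x ^ 2 - 15) * (x ^ 2 - 17) * (x ^ 2 - 255) * (x ^ 2 - 2161) := by
  obtain ⟨x, h⟩ := h
  refine ⟨x, ?_⟩
  rcases hmem with rfl|rfl|rfl|rfl
  · exact ((h.mul_right _).mul_right _).mul_right _
  · exact ((h.mul_left _).mul_right _).mul_right _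
  · exact (h.mul_left _).mul_right _
  · exact h.mul_left _

lemma odd_prime_case (p : ℕ) (hp : p.Prime) (hodd : p ≠ 2) (n : ℕ) :
    ∃ x : ℤ, (p:ℤ) ^ (n+1) ∣ (x ^ 2 - 15) * (x ^ 2 - 17) * (x ^ 2 - 255) * (x ^ 2 - 2161) := by
  haveI : Fact p.Prime := ⟨hp⟩
  haveI : NeZero p := ⟨hp.pos.ne'⟩
  suffices h : ∃ x : ℤ, ((p ^ (n+1) : ℕ) : ℤ) ∣
      (x ^ 2 - 15) * (x ^ 2 - 17) * (x ^ 2 - 255) * (x ^ 2 - 2161) by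
    obtain ⟨x, hx⟩ := h; exact ⟨x, by push_cast at hx; exact hx⟩
  by_cases h15 : p ∣ 15
  · -- p = 3 or p = 5, use 2161 ≡ 1
    have h3 : p = 3 ∨ p = 5 := by
      have := Nat.le_of_dvd (by norm_num) h15
      have := hp.two_le
      interval_cases p <;> revert h15 hp <;> decide
    have hbase : ∃ x : ℤ, (p:ℤ) ∣ x ^ 2 - 2161 := by
      refine ⟨1, ?_⟩
      rcases h3 with rfl | rfl <;> norm_num
    have hna : ¬ (p:ℤ) ∣ 2161 := by
      rcases h3 with rfl | rfl <;> norm_num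
    exact root_factor _ 2161 (by tauto) (by exact_mod_cast lift_odd p hp hodd 2161 hna hbase n)
  by_cases h17 : p ∣ 17
  · have h17' : p = 17 := (Nat.prime_dvd_prime_iff_eq hp (by norm_num)).mp h17
    subst h17'
    have hbase : ∃ x : ℤ, ((17:ℕ):ℤ) ∣ x ^ 2 - 15 := ⟨7, by norm_num⟩
    exact root_factor _ 15 (by tauto)
      (by exact_mod_cast lift_odd 17 hp hodd 15 (by norm_num) hbase n)
  have H15 : ¬ (p:ℤ) ∣ 15 := by exact_mod_cast h15
  have H17 : ¬ (p:ℤ) ∣ 17 := by exact_mod_cast h17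
  have hz15 : ((15:ℤ) : ZMod p) ≠ 0 := by
    rw [Ne, ZMod.intCast_zmod_eq_zero_iff_dvd]; exact H15
  have hz17 : ((17:ℤ) : ZMod p) ≠ 0 := by
    rw [Ne, ZMod.intCast_zmod_eq_zero_iff_dvd]; exact H17
  by_cases hs15 : IsSquare ((15:ℤ) : ZMod p)
  · exact root_factor _ 15 (by tauto)
      (by exact_mod_cast lift_odd p hp hodd 15 H15 (of_isSquare p 15 hs15) n)
  by_cases hs17 : IsSquare ((17:ℤ) : ZMod p)
  · exact root_factor _ 17 (by tauto)
      (by exact_mod_cast lift_odd p hp hodd 17 H17 (of_isSquare p 17 hs17) n)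
  · have hmul : ((255:ℤ) : ZMod p) = ((15:ℤ) : ZMod p) * ((17:ℤ) : ZMod p) := by
      push_cast; norm_num
    have hs255 : IsSquare ((255:ℤ) : ZMod p) := by
      rw [hmul]; exact nonsq_mul p hodd _ _ hz15 hz17 hs15 hs17
    have H255 : ¬ (p:ℤ) ∣ 255 := by
      intro h
      rcases (Int.Prime.dvd_mul' hp
        (show (p:ℤ) ∣ 15 * 17 by norm_num at h ⊢; exact h)) with h' | h'
      · exact H15 h'
      · exact H17 h'
    exact root_factor _ 255 (by tauto)
      (by exact_mod_cast lift_odd p hp hodd 255 H255 (of_isSquare p 255 hs255) n)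

/-- (x² − 15)(x² − 17)(x² − 255)(x² − 2161) has a root modulo every
positive integer. -/
theorem stmt_8 :
    ∀ m : ℕ, 0 < m →
      ∃ x : ℤ, (m : ℤ) ∣ (x ^ 2 - 15) * (x ^ 2 - 17) * (x ^ 2 - 255) * (x ^ 2 - 2161) := by
  intro m
  induction m using Nat.recOnPosPrimePosCoprime with
  | prime_pow p n hpp hn =>
    intro _
    have hp' : p.Prime := hpp
    obtain ⟨n', rfl⟩ : ∃ n', n = n' + 1 := ⟨n - 1, (Nat.succ_pred_eq_of_pos hn).symm⟩
    by_cases hp2 : p = 2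
    · subst hp2
      obtain ⟨x, -, hx⟩ := lift_two n'
      refine root_factor _ 2161 (by tauto) ⟨x, ?_⟩
      have h1 : ((2:ℤ)) ^ (n'+1) ∣ (2:ℤ) ^ (n'+3) := pow_dvd_pow 2 (by omega)
      exact_mod_cast h1.trans hx
    · obtain ⟨x, hx⟩ := odd_prime_case p hp' hp2 n'
      exact ⟨x, by exact_mod_cast hx⟩
  | zero => exact fun h => absurd h (lt_irrefl 0)
  | one => exact fun _ => ⟨0, by norm_num⟩
  | coprime a b ha hb hab iha ihb =>
    intro _
    obtain ⟨x, hx⟩ := iha (by omega)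
    obtain ⟨y, hy⟩ := ihb (by omega)
    have hco : IsCoprime (a:ℤ) (b:ℤ) := by
      rw [Int.isCoprime_iff_gcd_eq_one]
      exact_mod_cast hab
    obtain ⟨u, v, huv⟩ := hco
    refine ⟨x*v*(b:ℤ) + y*u*(a:ℤ), ?_⟩
    have hza : (a:ℤ) ∣ (x*v*(b:ℤ) + y*u*(a:ℤ)) - x := ⟨u*(y - x), by linear_combination x*huv⟩
    have hzb : (b:ℤ) ∣ (x*v*(b:ℤ) + y*u*(a:ℤ)) - y := ⟨v*(x - y), by linear_combination y*huv⟩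
    have hax : (x*v*(b:ℤ) + y*u*(a:ℤ)) ≡ x [ZMOD (a:ℤ)] :=
      (Int.modEq_iff_dvd.mpr hza).symm
    have hbx : (x*v*(b:ℤ) + y*u*(a:ℤ)) ≡ y [ZMOD (b:ℤ)] :=
      (Int.modEq_iff_dvd.mpr hzb).symm
    have h2a := hax.pow 2
    have h2b := hbx.pow 2
    have hFa : ((x*v*(b:ℤ) + y*u*(a:ℤ))^2 - 15) * ((x*v*(b:ℤ) + y*u*(a:ℤ))^2 - 17) *
        ((x*v*(b:ℤ) + y*u*(a:ℤ))^2 - 255) * ((x*v*(b:ℤ) + y*u*(a:ℤ))^2 - 2161) ≡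
        (x^2 - 15) * (x^2 - 17) * (x^2 - 255) * (x^2 - 2161) [ZMOD (a:ℤ)] :=
      (((h2a.sub_right 15).mul (h2a.sub_right 17)).mul (h2a.sub_right 255)).mul
        (h2a.sub_right 2161)
    have hFb : ((x*v*(b:ℤ) + y*u*(a:ℤ))^2 - 15) * ((x*v*(b:ℤ) + y*u*(a:ℤ))^2 - 17) *
        ((x*v*(b:ℤ) + y*u*(a:ℤ))^2 - 255) * ((x*v*(b:ℤ) + y*u*(a:ℤ))^2 - 2161) ≡
        (y^2 - 15) * (y^2 - 17) * (y^2 - 255) * (y^2 - 2161) [ZMOD (b:ℤ)] :=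
      (((h2b.sub_right 15).mul (h2b.sub_right 17)).mul (h2b.sub_right 255)).mul
        (h2b.sub_right 2161)
    have da : (a:ℤ) ∣ _ := (Int.modEq_zero_iff_dvd.mp
      (hFa.trans (Int.modEq_zero_iff_dvd.mpr hx)))
    have db : (b:ℤ) ∣ _ := (Int.modEq_zero_iff_dvd.mp
      (hFb.trans (Int.modEq_zero_iff_dvd.mpr hy)))
    rw [Nat.cast_mul]
    exact IsCoprime.mul_dvd ⟨u, v, huv⟩ da db
end

section
/- For every positive integer m, the congruence (x² − 15)(x² − 17)(x² − 557)(x² − 255)(x² − 871711) ≡ 0 (mod m) has an integer solution. -/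
set_option maxRecDepth 8000

private def Fpoly (x : ℤ) : ℤ :=
  (x ^ 2 - 15) * (x ^ 2 - 17) * (x ^ 2 - 557) * (x ^ 2 - 255) * (x ^ 2 - 871711)

private lemma dvd_of_dvd_sub {n x y : ℤ} (h : n ∣ y - x) (hx : n ∣ x) : n ∣ y := by
  obtain ⟨c, hc⟩ := h
  obtain ⟨d, hd⟩ := hx
  exact ⟨c + d, by linarith⟩

private lemma hensel_odd {p : ℕ} (hp : p.Prime) (hp2 : p ≠ 2) {a : ℤ} (ha : ¬ (p:ℤ) ∣ a)
    (h : ∃ x : ℤ, (p:ℤ) ∣ x ^ 2 - a) : ∀ k : ℕ, ∃ x : ℤ, (p:ℤ) ^ k ∣ x ^ 2 - a := by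
  haveI : Fact p.Prime := ⟨hp⟩
  intro k
  induction k with
  | zero => exact ⟨0, by simp⟩
  | succ k ih =>
    rcases Nat.eq_zero_or_pos k with rfl | hk
    · simpa using h
    obtain ⟨x, c, hc⟩ := ih
    have h1 : (p:ℤ) ∣ x ^ 2 - a :=
      dvd_trans (dvd_pow_self (p:ℤ) hk.ne') ⟨c, hc⟩
    have hpx : ¬ (p:ℤ) ∣ x := by
      intro hdvd
      exact ha (by
        have h2 : (p:ℤ) ∣ x ^ 2 := by rw [sq]; exact hdvd.mul_right x
        have := h2.sub h1
        simpa using this)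
    have h2x : ((2 * x : ℤ) : ZMod p) ≠ 0 := by
      rw [Ne, ZMod.intCast_zmod_eq_zero_iff_dvd]
      intro hdvd
      rcases (Nat.prime_iff_prime_int.mp hp).dvd_mul.mp hdvd with h' | h'
      · have h2 : p ∣ 2 := by exact_mod_cast h'
        exact hp2 ((Nat.prime_dvd_prime_iff_eq hp Nat.prime_two).mp h2)
      · exact hpx h'
    set t : ℤ := ((-(c : ZMod p) * ((2 * x : ℤ) : ZMod p)⁻¹).val : ℤ) with ht
    have hdt : (p:ℤ) ∣ c + 2 * x * t := by
      rw [← ZMod.intCast_zmod_eq_zero_iff_dvd]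
      push_cast [ht]
      rw [ZMod.natCast_val, ZMod.cast_id]
      push_cast at h2x ⊢
      field_simp
      have hx0 : (x : ZMod p) ≠ 0 := right_ne_zero_of_mul h2x
      have h20 : (2 : ZMod p) ≠ 0 := left_ne_zero_of_mul h2x
      linear_combination (-(c : ZMod p) * ((2 : ZMod p)⁻¹ * 2)) * mul_inv_cancel₀ hx0
        + (-(c : ZMod p)) * inv_mul_cancel₀ h20
    refine ⟨x + t * (p:ℤ) ^ k, ?_⟩
    obtain ⟨d, hd⟩ := hdt
    have key : (x + t * (p:ℤ) ^ k) ^ 2 - a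
        = (p:ℤ) ^ (k + 1) * d + t ^ 2 * ((p:ℤ) ^ k * (p:ℤ) ^ k) := by
      have expand : (x + t * (p:ℤ) ^ k) ^ 2 - a
          = (x ^ 2 - a) + (p:ℤ) ^ k * (2 * x * t) + t ^ 2 * ((p:ℤ) ^ k * (p:ℤ) ^ k) := by
        ring
      rw [expand, hc, pow_succ]
      linear_combination ((p:ℤ) ^ k) * hd
    rw [key]
    refine dvd_add (Dvd.intro _ rfl) ?_
    exact Dvd.dvd.mul_left (by
      rw [← pow_add]
      exact pow_dvd_pow _ (by omega)) _

private lemma hensel_two {a : ℤ} (ha : (8:ℤ) ∣ a - 1) :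
    ∀ k : ℕ, ∃ x : ℤ, (2:ℤ) ^ k ∣ x ^ 2 - a := by
  have main : ∀ j : ℕ, ∃ x : ℤ, (2:ℤ) ^ (j + 3) ∣ x ^ 2 - a := by
    intro j
    induction j with
    | zero =>
      obtain ⟨d, hd⟩ := ha
      refine ⟨1, -d, ?_⟩
      have h8 : (2:ℤ) ^ (0 + 3) = 8 := by norm_num
      rw [h8]; linarith
    | succ j ih =>
      obtain ⟨x, c, hc⟩ := ih
      obtain ⟨m, hm⟩ : Odd x := by
        rcases Int.even_or_odd x with ⟨m, hm⟩ | ho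
        · exfalso
          subst hm
          obtain ⟨d, hd⟩ := ha
          obtain ⟨e, he⟩ : (2:ℤ) ∣ 2 ^ (j + 3) := dvd_pow_self 2 (by omega)
          have h1 : (1:ℤ) = (m + m) ^ 2 - 2 * (e * c) - 8 * d := by
            linear_combination (-1 : ℤ) * hc - c * he - hd
          have h4 : (2:ℤ) ∣ (m + m) ^ 2 := ⟨m * (m + m), by ring⟩
          omega
        · exact ho
      refine ⟨x + c * 2 ^ (j + 2), ?_⟩
      have key : (x + c * 2 ^ (j + 2)) ^ 2 - a
          = 2 ^ (j + 4) * (c * (m + 1)) + c ^ 2 * (2 ^ (j + 2) * 2 ^ (j + 2)) := by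
        have expand : (x + c * 2 ^ (j + 2)) ^ 2 - a
            = (x ^ 2 - a) + (2 * 2 ^ (j + 2)) * (x * c) + c ^ 2 * (2 ^ (j + 2) * 2 ^ (j + 2)) := by
          ring
        rw [expand, hc, hm]
        ring
      have hsucc : j + 1 + 3 = j + 4 := by omega
      rw [hsucc, key]
      refine dvd_add (Dvd.intro _ rfl) (Dvd.dvd.mul_left ?_ _)
      rw [← pow_add]
      exact pow_dvd_pow _ (by omega)
  intro k
  rcases le_or_gt k 3 with hk | hk
  · obtain ⟨x, hx⟩ := main 0
    exact ⟨x, dvd_trans (pow_dvd_pow _ hk) hx⟩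
  · obtain ⟨x, hx⟩ := main (k - 3)
    exact ⟨x, by have h3 : k - 3 + 3 = k := by omega
                 rwa [h3] at hx⟩

private lemma seed_of_isSquare {p : ℕ} (hp : p.Prime) {a : ℤ} (h : IsSquare (a : ZMod p)) :
    ∃ x : ℤ, (p:ℤ) ∣ x ^ 2 - a := by
  haveI : Fact p.Prime := ⟨hp⟩
  obtain ⟨r, hr⟩ := h
  refine ⟨(r.val : ℤ), ?_⟩
  rw [← ZMod.intCast_zmod_eq_zero_iff_dvd]
  push_cast
  rw [ZMod.natCast_val, ZMod.cast_id, hr]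
  ring

private lemma exists_good (p : ℕ) (hp : p.Prime) (hp2 : p ≠ 2) :
    ∃ a : ℤ, (a = 15 ∨ a = 17 ∨ a = 557 ∨ a = 255 ∨ a = 871711) ∧ ¬ (p:ℤ) ∣ a ∧
      ∃ x : ℤ, (p:ℤ) ∣ x ^ 2 - a := by
  haveI : Fact p.Prime := ⟨hp⟩
  by_cases h3 : p = 3
  · subst h3
    exact ⟨871711, by norm_num, by norm_num, 1, ⟨-290570, by norm_num⟩⟩
  by_cases h5 : p = 5
  · subst h5
    exact ⟨871711, by norm_num, by norm_num, 1, ⟨-174342, by norm_num⟩⟩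
  by_cases h17 : p = 17
  · subst h17
    exact ⟨15, by norm_num, by norm_num, 7, ⟨2, by norm_num⟩⟩
  by_cases h29 : p = 29
  · subst h29
    exact ⟨557, by norm_num, by norm_num, 8, ⟨-17, by norm_num⟩⟩
  by_cases h557 : p = 557
  · subst h557
    exact ⟨15, by norm_num, by norm_num, 153, ⟨42, by norm_num⟩⟩
  by_cases h30059 : p = 30059
  · subst h30059
    exact ⟨15, by norm_num, by norm_num, 5882, ⟨1151, by norm_num⟩⟩
  have h15 : ¬ (p:ℤ) ∣ 15 := by
    intro hd
    have hd' : p ∣ 15 := by exact_mod_cast hd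
    have hmem : p ∈ Nat.divisors 15 := Nat.mem_divisors.mpr ⟨hd', by norm_num⟩
    fin_cases hmem <;>
      first | exact h3 rfl | exact h5 rfl | exact absurd hp (by decide)
  have h17' : ¬ (p:ℤ) ∣ 17 := by
    intro hd
    have hd' : p ∣ 17 := by exact_mod_cast hd
    have hmem : p ∈ Nat.divisors 17 := Nat.mem_divisors.mpr ⟨hd', by norm_num⟩
    fin_cases hmem <;>
      first | exact h17 rfl | exact absurd hp (by decide)
  have h255 : ¬ (p:ℤ) ∣ 255 := by
    intro hd
    have hd' : p ∣ 255 := by exact_mod_cast hd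
    have hmem : p ∈ Nat.divisors 255 := Nat.mem_divisors.mpr ⟨hd', by norm_num⟩
    fin_cases hmem <;>
      first | exact h3 rfl | exact h5 rfl | exact h17 rfl | exact absurd hp (by decide)
  have hz15 : ((15:ℤ) : ZMod p) ≠ 0 := by
    rw [Ne, ZMod.intCast_zmod_eq_zero_iff_dvd]; exact h15
  have hz17 : ((17:ℤ) : ZMod p) ≠ 0 := by
    rw [Ne, ZMod.intCast_zmod_eq_zero_iff_dvd]; exact h17'
  have hz255 : ((255:ℤ) : ZMod p) ≠ 0 := by
    rw [Ne, ZMod.intCast_zmod_eq_zero_iff_dvd]; exact h255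
  by_cases hs15 : IsSquare (((15:ℤ)) : ZMod p)
  · exact ⟨15, by norm_num, h15, seed_of_isSquare hp hs15⟩
  by_cases hs17 : IsSquare (((17:ℤ)) : ZMod p)
  · exact ⟨17, by norm_num, h17', seed_of_isSquare hp hs17⟩
  refine ⟨255, by norm_num, h255, seed_of_isSquare hp ?_⟩
  have hmul : ((255:ℤ) : ZMod p) = ((15:ℤ) : ZMod p) * ((17:ℤ) : ZMod p) := by
    push_cast; norm_num
  rw [← quadraticChar_one_iff_isSquare hz255]
  rw [hmul, map_mul]
  rw [(quadraticChar_neg_one_iff_not_isSquare).mpr hs15,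
    (quadraticChar_neg_one_iff_not_isSquare).mpr hs17]
  norm_num

private lemma factor_dvd {x a d : ℤ}
    (hA : a = 15 ∨ a = 17 ∨ a = 557 ∨ a = 255 ∨ a = 871711)
    (hd : d ∣ x ^ 2 - a) : d ∣ Fpoly x := by
  unfold Fpoly
  rcases hA with rfl | rfl | rfl | rfl | rfl
  · exact dvd_mul_of_dvd_left (dvd_mul_of_dvd_left (dvd_mul_of_dvd_left
      (dvd_mul_of_dvd_left hd _) _) _) _
  · exact dvd_mul_of_dvd_left (dvd_mul_of_dvd_left (dvd_mul_of_dvd_left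
      (Dvd.dvd.mul_left hd _) _) _) _
  · exact dvd_mul_of_dvd_left (dvd_mul_of_dvd_left (Dvd.dvd.mul_left hd _) _) _
  · exact dvd_mul_of_dvd_left (Dvd.dvd.mul_left hd _) _
  · exact Dvd.dvd.mul_left hd _

private lemma prime_pow_root (p : ℕ) (hp : p.Prime) (k : ℕ) :
    ∃ x : ℤ, (p:ℤ) ^ k ∣ Fpoly x := by
  by_cases hp2 : p = 2
  · subst hp2
    obtain ⟨x, hx⟩ := hensel_two (a := 17) (by norm_num) k
    exact ⟨x, factor_dvd (a := 17) (by norm_num) (by exact_mod_cast hx)⟩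
  · obtain ⟨a, hA, hnd, hseed⟩ := exists_good p hp hp2
    obtain ⟨x, hx⟩ := hensel_odd hp hp2 hnd hseed k
    exact ⟨x, factor_dvd hA hx⟩

private lemma crt_int {a b : ℕ} (ha : 0 < a) (hb : 0 < b) (hab : a.Coprime b) (x y : ℤ) :
    ∃ z : ℤ, (a:ℤ) ∣ z - x ∧ (b:ℤ) ∣ z - y := by
  haveI : NeZero a := ⟨ha.ne'⟩
  haveI : NeZero b := ⟨hb.ne'⟩
  haveI : NeZero (a * b) := ⟨Nat.mul_ne_zero ha.ne' hb.ne'⟩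
  set w : ZMod (a * b) := (ZMod.chineseRemainder hab).symm ((x : ZMod a), (y : ZMod b)) with hw
  refine ⟨(w.val : ℤ), ?_, ?_⟩
  · have h1 : ((w.val : ℤ) : ZMod a) = (x : ZMod a) := by
      push_cast
      rw [ZMod.natCast_val]
      have := (ZMod.chineseRemainder hab).apply_symm_apply ((x : ZMod a), (y : ZMod b))
      rw [← hw] at this
      have hfst := congrArg Prod.fst this
      simpa [ZMod.chineseRemainder, ZMod.castHom_apply] using hfst
    rw [ZMod.intCast_eq_intCast_iff] at h1
    exact h1.symm.dvd
  · have h1 : ((w.val : ℤ) : ZMod b) = (y : ZMod b) := by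
      push_cast
      rw [ZMod.natCast_val]
      have := (ZMod.chineseRemainder hab).apply_symm_apply ((x : ZMod a), (y : ZMod b))
      rw [← hw] at this
      have hsnd := congrArg Prod.snd this
      simpa [ZMod.chineseRemainder, ZMod.castHom_apply] using hsnd
    rw [ZMod.intCast_eq_intCast_iff] at h1
    exact h1.symm.dvd

private lemma F_modeq {n x y : ℤ} (h : (n:ℤ) ∣ y - x) : n ∣ Fpoly y - Fpoly x := by
  have hm : x ≡ y [ZMOD n] := (Int.modEq_iff_dvd).mpr h
  have h2 : x ^ 2 ≡ y ^ 2 [ZMOD n] := hm.pow 2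
  have hF : Fpoly x ≡ Fpoly y [ZMOD n] :=
    ((((h2.sub_right 15).mul (h2.sub_right 17)).mul (h2.sub_right 557)).mul
      (h2.sub_right 255)).mul (h2.sub_right 871711)
  exact (Int.modEq_iff_dvd).mp hF

private lemma main_aux : ∀ m : ℕ, 0 < m → ∃ x : ℤ, (m:ℤ) ∣ Fpoly x := by
  intro m
  induction m using Nat.recOnPosPrimePosCoprime with
  | prime_pow p n hpp hn =>
    intro _
    obtain ⟨x, hx⟩ := prime_pow_root p hpp n
    exact ⟨x, by push_cast; exact hx⟩
  | zero => intro h; omega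
  | one => intro _; exact ⟨0, one_dvd _⟩
  | coprime a b ha hb hab iha ihb =>
    intro _
    obtain ⟨u, hu⟩ := iha (by omega)
    obtain ⟨v, hv⟩ := ihb (by omega)
    obtain ⟨z, hza, hzb⟩ := crt_int (by omega) (by omega) hab u v
    have hFa : (a:ℤ) ∣ Fpoly z := dvd_of_dvd_sub (F_modeq hza) hu
    have hFb : (b:ℤ) ∣ Fpoly z := dvd_of_dvd_sub (F_modeq hzb) hv
    refine ⟨z, ?_⟩
    push_cast
    exact (Nat.isCoprime_iff_coprime.mpr hab).mul_dvd hFa hFb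

/-- (x² − 15)(x² − 17)(x² − 557)(x² − 255)(x² − 871711) has a root modulo
every positive integer. -/
theorem stmt_14 :
    ∀ m : ℕ, 0 < m →
      ∃ x : ℤ, (m : ℤ) ∣
        (x ^ 2 - 15) * (x ^ 2 - 17) * (x ^ 2 - 557) * (x ^ 2 - 255) * (x ^ 2 - 871711) := by
  intro m hm
  obtain ⟨x, hx⟩ := main_aux m hm
  exact ⟨x, hx⟩
end

section
/- Let a₁, …, a_n (n ≥ 3) be distinct nonzero square-free integers none equal to 1, and suppose there is a subset T ⊆ {1,…,n} of odd cardinality such that ∏_{j∈T} a_j is a perfect square, for every j ∈ T and every odd prime p | a_j there exists i ≠ j with (a_i/p) = +1, and some a_i ≡ 1 (mod 8) with a_i ≠ 1. Then the polynomial ∏_{i=1}^n (x² − a_i) has a root modulo every positive integer. -/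
/-- Hensel lifting for square roots modulo powers of an odd prime. -/
lemma henselOdd_aux (p : ℕ) (hp : p.Prime) (hpodd : Odd p) (a : ℤ) (ha : ¬ (p:ℤ) ∣ a)
    (hx : ∃ x : ℤ, (p:ℤ) ∣ x^2 - a) (k : ℕ) : ∃ x : ℤ, ((p:ℤ))^(k+1) ∣ x^2 - a := by
  haveI : Fact p.Prime := ⟨hp⟩
  induction k with
  | zero => simpa using hx
  | succ k ih =>
    obtain ⟨x, t, ht⟩ := ih
    have hpx : (p:ℤ) ∣ x^2 - a := dvd_trans (dvd_pow_self _ (Nat.succ_ne_zero k)) ⟨t, ht⟩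
    have hx0 : (x : ZMod p) ≠ 0 := by
      intro h
      apply ha
      rw [← ZMod.intCast_zmod_eq_zero_iff_dvd] at hpx ⊢
      push_cast at hpx
      rw [h] at hpx
      simpa using hpx.symm
    have h2 : ((2*x : ℤ) : ZMod p) ≠ 0 := by
      push_cast
      apply mul_ne_zero _ hx0
      have h2' : ((2:ℕ) : ZMod p) ≠ 0 := by
        rw [Ne, ZMod.natCast_eq_zero_iff]
        intro h
        have := (Nat.prime_dvd_prime_iff_eq hp Nat.prime_two).mp h
        have := Nat.odd_iff.mp hpodd
        omega
      exact_mod_cast h2'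
    set s : ℤ := (((-(t : ZMod p)) * (((2*x : ℤ) : ZMod p))⁻¹).val : ℤ) with hsdef
    have hs : (p:ℤ) ∣ t + 2*x*s := by
      rw [← ZMod.intCast_zmod_eq_zero_iff_dvd]
      push_cast [hsdef]
      rw [ZMod.natCast_val, ZMod.cast_id]
      push_cast at h2 ⊢
      field_simp
      rw [div_self (left_ne_zero_of_mul h2)]; ring
    obtain ⟨w, hw⟩ := hs
    exact ⟨x + (p:ℤ)^(k+1) * s, w + (p:ℤ)^k * s^2, by
      linear_combination ht + (p:ℤ)^(k+1) * hw⟩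

/-- Hensel lifting for square roots modulo powers of 2, starting from `a ≡ 1 (mod 8)`. -/
lemma hensel2_aux (a : ℤ) (ha : a % 8 = 1) (k : ℕ) : ∃ x : ℤ, (2:ℤ)^k ∣ x^2 - a := by
  have aux : ∀ j : ℕ, ∃ x : ℤ, x % 2 = 1 ∧ (2:ℤ)^(j+3) ∣ x^2 - a := by
    intro j
    induction j with
    | zero =>
      refine ⟨1, rfl, ?_⟩
      have : (8:ℤ) ∣ 1^2 - a := by omega
      simpa using this
    | succ j ih =>
      obtain ⟨x, hxodd, t, ht⟩ := ih
      by_cases h2 : (2:ℤ) ∣ t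
      · obtain ⟨w, hw⟩ := h2
        exact ⟨x, hxodd, w, by rw [ht, hw]; ring⟩
      · have hev : (2:ℤ) ∣ t + x := by omega
        obtain ⟨w, hw⟩ := hev
        have hp2 : (2:ℤ) ∣ 2^(j+2) := dvd_pow_self 2 (by omega)
        refine ⟨x + 2^(j+2), by omega, w + 2^j, ?_⟩
        have e1 : (2:ℤ)^(j+1+3) = 2^(j+3)*2 := by ring
        linear_combination ht + (2:ℤ)^(j+3) * hw
  obtain ⟨x, _, hx⟩ := aux k
  exact ⟨x, dvd_trans (pow_dvd_pow 2 (by omega)) hx⟩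

/-- The prime-power case of the main theorem. -/
lemma keyPP_aux (n : ℕ) (a : Fin n → ℤ)
    (T : Finset (Fin n)) (hodd : Odd T.card)
    (hsq : ∃ c : ℤ, ∏ j ∈ T, a j = c ^ 2)
    (hres : ∀ j ∈ T, ∀ p : ℕ, p.Prime → Odd p → (p : ℤ) ∣ a j →
      ∃ i, i ≠ j ∧ ¬ (p : ℤ) ∣ a i ∧ ∃ x : ℤ, (p : ℤ) ∣ x ^ 2 - a i)
    (h8 : ∃ i, a i % 8 = 1 ∧ a i ≠ 1)
    (p k : ℕ) (hp : p.Prime) (hk : 0 < k) :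
    ∃ x : ℤ, ((p:ℤ))^k ∣ ∏ i, (x ^ 2 - a i) := by
  by_cases hp2 : p = 2
  · subst hp2
    obtain ⟨i, hi, -⟩ := h8
    obtain ⟨x, hx⟩ := hensel2_aux _ hi k
    refine ⟨x, dvd_trans ?_ (Finset.dvd_prod_of_mem _ (Finset.mem_univ i))⟩
    exact_mod_cast hx
  · have hpodd : Odd p := hp.odd_of_ne_two hp2
    have main : ∃ i : Fin n, ¬ (p:ℤ) ∣ a i ∧ ∃ x : ℤ, (p:ℤ) ∣ x^2 - a i := by
      by_cases hT : ∃ j ∈ T, (p:ℤ) ∣ a j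
      · obtain ⟨j, hj, hpj⟩ := hT
        obtain ⟨i, -, hia, hx⟩ := hres j hj p hp hpodd hpj
        exact ⟨i, hia, hx⟩
      · push_neg at hT
        haveI : Fact p.Prime := ⟨hp⟩
        obtain ⟨c, hc⟩ := hsq
        have hall : ∀ j ∈ T, ((a j : ZMod p)) ≠ 0 := fun j hj h =>
          hT j hj ((ZMod.intCast_zmod_eq_zero_iff_dvd _ _).mp h)
        have hcprod : (∏ j ∈ T, ((a j : ZMod p))) = (c : ZMod p)^2 := by
          rw [← Int.cast_prod, hc]; push_cast; ring
        have hc0 : (c : ZMod p) ≠ 0 := by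
          intro h
          have := Finset.prod_ne_zero_iff.mpr hall
          rw [hcprod, h] at this
          simp at this
        have hchi : ∏ j ∈ T, quadraticChar (ZMod p) ((a j : ZMod p)) = 1 := by
          rw [← map_prod, hcprod, map_pow]
          exact quadraticChar_sq_one hc0
        have hex : ∃ j ∈ T, quadraticChar (ZMod p) ((a j : ZMod p)) = 1 := by
          by_contra h
          push_neg at h
          have hall1 : ∀ j ∈ T, quadraticChar (ZMod p) ((a j : ZMod p)) = -1 := fun j hj =>
            (quadraticChar_dichotomy (hall j hj)).resolve_left (h j hj)
          rw [Finset.prod_congr rfl hall1, Finset.prod_const, hodd.neg_one_pow] at hchi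
          norm_num at hchi
        obtain ⟨j, hj, hχ⟩ := hex
        obtain ⟨r, hr⟩ := (quadraticChar_one_iff_isSquare (hall j hj)).mp hχ
        refine ⟨j, hT j hj, ((r.val : ℤ)), ?_⟩
        rw [← ZMod.intCast_zmod_eq_zero_iff_dvd]
        push_cast
        rw [ZMod.natCast_val, ZMod.cast_id, hr]
        ring
    obtain ⟨i, hia, hx⟩ := main
    obtain ⟨x, hx'⟩ := henselOdd_aux p hp hpodd _ hia hx (k-1)
    rw [show k - 1 + 1 = k from by omega] at hx'
    exact ⟨x, dvd_trans hx' (Finset.dvd_prod_of_mem _ (Finset.mem_univ i))⟩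

/-- Sufficiency part of the intersectivity criterion for
∏ (x² − aᵢ), with a₁,…,aₙ distinct nonzero square-free integers, none equal to 1.
Here "(aᵢ/p) = +1" is phrased as: aᵢ is a nonzero square modulo the odd prime p. -/
theorem stmt_15 (n : ℕ) (hn : 3 ≤ n) (a : Fin n → ℤ)
    (hinj : Function.Injective a)
    (hne0 : ∀ i, a i ≠ 0) (hsf : ∀ i, Squarefree (a i)) (hne1 : ∀ i, a i ≠ 1)
    (T : Finset (Fin n)) (hodd : Odd T.card)
    (hsq : ∃ c : ℤ, ∏ j ∈ T, a j = c ^ 2)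
    (hres : ∀ j ∈ T, ∀ p : ℕ, p.Prime → Odd p → (p : ℤ) ∣ a j →
      ∃ i, i ≠ j ∧ ¬ (p : ℤ) ∣ a i ∧ ∃ x : ℤ, (p : ℤ) ∣ x ^ 2 - a i)
    (h8 : ∃ i, a i % 8 = 1 ∧ a i ≠ 1) :
    ∀ m : ℕ, 0 < m → ∃ x : ℤ, (m : ℤ) ∣ ∏ i, (x ^ 2 - a i) := by
  intro m
  induction m using Nat.recOnPosPrimePosCoprime with
  | prime_pow p k hp hk =>
    intro _
    obtain ⟨x, hx⟩ := keyPP_aux n a T hodd hsq hres h8 p k hp hk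
    exact ⟨x, by push_cast; exact hx⟩
  | zero => exact fun h => absurd h (lt_irrefl 0)
  | one => exact fun _ => ⟨0, by simp⟩
  | coprime m₁ m₂ h₁ h₂ hco ih₁ ih₂ =>
    intro _
    obtain ⟨x₁, hx₁⟩ := ih₁ (by omega)
    obtain ⟨x₂, hx₂⟩ := ih₂ (by omega)
    have hco' : IsCoprime (m₁:ℤ) (m₂:ℤ) := Nat.isCoprime_iff_coprime.mpr hco
    obtain ⟨u, v, huv⟩ := hco'
    set z : ℤ := x₂*u*m₁ + x₁*v*m₂ with hz
    have hz₁ : (m₁:ℤ) ∣ z - x₁ := ⟨u*(x₂-x₁), by linear_combination x₁ * huv⟩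
    have hz₂ : (m₂:ℤ) ∣ z - x₂ := ⟨v*(x₁-x₂), by linear_combination x₂ * huv⟩
    have key : ∀ (m : ℕ) (x : ℤ), (m:ℤ) ∣ z - x → (m:ℤ) ∣ ∏ i, (x ^ 2 - a i) →
        (m:ℤ) ∣ ∏ i, (z ^ 2 - a i) := by
      intro m x hzx hdvd
      rw [← ZMod.intCast_zmod_eq_zero_iff_dvd] at hdvd ⊢
      rw [← ZMod.intCast_zmod_eq_zero_iff_dvd, Int.cast_sub, sub_eq_zero] at hzx
      push_cast at hdvd ⊢
      rw [hzx]
      exact hdvd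
    have := (Nat.isCoprime_iff_coprime.mpr hco).mul_dvd (key m₁ x₁ hz₁ hx₁) (key m₂ x₂ hz₂ hx₂)
    exact ⟨z, by push_cast; exact this⟩
end

section
/- Let a and b be positive integers such that gcd(a,b) is square-free. Then the set of square-free natural numbers congruent to b modulo a has positive asymptotic density; in particular, it is infinite. -/
open Filter

namespace Stmt16
open Finset ArithmeticFunction
open scoped Classical
open scoped ArithmeticFunction.Moebius ArithmeticFunction.zeta

lemma sum_div_moebius (n : ℕ) (hn : n ≠ 0) :
    ∑ d ∈ n.divisors, (μ d : ℤ) = if n = 1 then 1 else 0 := by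
  have := ArithmeticFunction.moebius_mul_coe_zeta
  have h2 := congrArg (fun f => f n) this
  simp only [ArithmeticFunction.mul_apply, ArithmeticFunction.one_apply,
    ArithmeticFunction.natCoe_apply] at h2
  rw [← h2]
  rw [show ∑ x ∈ n.divisorsAntidiagonal, (μ x.1 : ℤ) * ((ζ x.2 : ℕ) : ℤ)
      = ∑ x ∈ n.divisorsAntidiagonal, (μ x.1 : ℤ) from Finset.sum_congr rfl (by
    intro x hx
    rw [Nat.mem_divisorsAntidiagonal] at hx
    have : x.2 ≠ 0 := fun h => hn (by rw [← hx.1, h, mul_zero])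
    simp [ArithmeticFunction.zeta_apply, this])]
  exact (Nat.sum_divisorsAntidiagonal (fun x _ => (μ x : ℤ))).symm

lemma sq_dvd_iff {k s m : ℕ} (hk : k ≠ 0) (hksm : s ^ 2 * m = k) (hm : Squarefree m) (d : ℕ) :
    d ^ 2 ∣ k ↔ d ∣ s := by
  constructor
  · intro hd
    have hd0 : d ≠ 0 := by rintro rfl; simp at hd; omega
    have hs0 : s ≠ 0 := by rintro rfl; simp at hksm; omega
    rw [← Nat.factorization_le_iff_dvd hd0 hs0]
    have h1 := (Nat.factorization_le_iff_dvd (pow_ne_zero 2 hd0) hk).mpr hd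
    intro p
    have h2 := h1 p
    have hm0 : m ≠ 0 := hm.ne_zero
    rw [← hksm, Nat.factorization_mul (pow_ne_zero 2 hs0) hm0, Nat.factorization_pow,
      Nat.factorization_pow] at h2
    have h3 : m.factorization p ≤ 1 := hm.natFactorization_le_one p
    simp at h2 ⊢
    omega
  · intro hd
    exact dvd_trans (pow_dvd_pow_of_dvd hd 2) ⟨m, hksm.symm⟩

lemma moebius_indicator (k : ℕ) (hk : k ≠ 0) :
    (∑ d ∈ k.divisors, if d ^ 2 ∣ k then (μ d : ℤ) else 0)
      = if Squarefree k then 1 else 0 := by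
  obtain ⟨m, s, hms, hm⟩ := Nat.sq_mul_squarefree k
  have hs0 : s ≠ 0 := by rintro rfl; simp at hms; omega
  have hset : k.divisors.filter (fun d => d ^ 2 ∣ k) = s.divisors := by
    ext d
    simp only [Finset.mem_filter, Nat.mem_divisors]
    constructor
    · rintro ⟨⟨hdk, _⟩, hd2⟩
      exact ⟨(sq_dvd_iff hk hms hm d).mp hd2, hs0⟩
    · rintro ⟨hds, _⟩
      have hd2 : d ^ 2 ∣ k := (sq_dvd_iff hk hms hm d).mpr hds
      exact ⟨⟨dvd_trans (dvd_pow_self d two_ne_zero) hd2, hk⟩, hd2⟩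
  rw [← Finset.sum_filter, hset, sum_div_moebius s hs0]
  congr 1
  have : Squarefree k ↔ s = 1 := by
    constructor
    · intro hsq
      by_contra hs1
      obtain ⟨p, hp, hps⟩ := Nat.exists_prime_and_dvd hs1
      have : p * p ∣ k := by
        have : p ^ 2 ∣ s ^ 2 := pow_dvd_pow_of_dvd hps 2
        calc p * p = p ^ 2 := (sq p).symm
        _ ∣ s ^ 2 := this
        _ ∣ k := ⟨m, hms.symm⟩
      exact hp.not_isUnit (hsq p this)
    · rintro rfl
      rw [← hms]; simpa using hm
  simp [this]

noncomputable def cnt (P : ℕ → Prop) (N : ℕ) : ℕ := ((Finset.Icc 1 N).filter P).card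

lemma cnt_le_of_unique (P : ℕ → Prop) (L : ℕ) (hL : 0 < L)
    (huniq : ∀ x y, P x → P y → x % L = y % L) (N : ℕ) :
    cnt P N ≤ N / L + 1 := by
  have key : ∀ x y, x ∈ (Finset.Icc 1 N).filter P → y ∈ (Finset.Icc 1 N).filter P →
      x < y → (x - 1) / L < (y - 1) / L := by
    intro x y hx hy hxy
    simp only [Finset.mem_filter, Finset.mem_Icc] at hx hy
    have hdvd : L ∣ y - x := (Nat.modEq_iff_dvd' hxy.le).mp (huniq x y hx.2 hy.2)
    have hyx : x + L ≤ y := by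
      obtain ⟨c, hc⟩ := hdvd
      have hc0 : c ≠ 0 := by rintro rfl; omega
      have : L ≤ y - x := by
        calc L = L * 1 := (mul_one L).symm
        _ ≤ L * c := Nat.mul_le_mul_left L (Nat.one_le_iff_ne_zero.2 hc0)
        _ = y - x := hc.symm
      omega
    calc (x - 1) / L < (x - 1) / L + 1 := Nat.lt_succ_self _
    _ = (x - 1 + L) / L := (Nat.add_div_right _ hL).symm
    _ ≤ (y - 1) / L := Nat.div_le_div_right (by omega)
  rw [cnt, ← Finset.card_range (N / L + 1)]
  apply Finset.card_le_card_of_injOn (fun k => (k - 1) / L)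
  · intro k hk
    simp only [Finset.mem_coe, Finset.mem_filter, Finset.mem_Icc] at hk
    simp only [Finset.mem_coe, Finset.mem_range]
    have : (k - 1) / L ≤ N / L := Nat.div_le_div_right (by omega)
    omega
  · intro x hx y hy hxy
    rcases lt_trichotomy x y with h | h | h
    · exact absurd hxy (key x y hx hy h).ne
    · exact h
    · exact absurd hxy.symm (key y x hy hx h).ne

lemma cnt_ge (P : ℕ → Prop) (L : ℕ) (hL : 0 < L)
    (hper : ∀ k, P k → P (k + L)) (r : ℕ) (hr : P r) (hrlt : r < L) (N : ℕ) :
    N / L ≤ cnt P N + 1 := by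
  rcases Nat.eq_zero_or_pos (N / L) with h0 | h1
  · omega
  have hPj : ∀ j : ℕ, P (r + j * L) := by
    intro j
    induction j with
    | zero => simpa using hr
    | succ j ih =>
        have := hper _ ih
        have heq : r + (j + 1) * L = r + j * L + L := by ring
        rw [heq]; exact this
  have hcard : N / L - 1 ≤ cnt P N := by
    rw [cnt, ← Finset.card_range (N / L - 1)]
    apply Finset.card_le_card_of_injOn (fun j => r + (j + 1) * L)
    · intro j hj
      simp only [Finset.mem_coe, Finset.mem_range] at hj
      simp only [Finset.mem_coe, Finset.mem_filter, Finset.mem_Icc]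
      refine ⟨⟨by nlinarith, ?_⟩, hPj (j + 1)⟩
      have hjle : (j + 2) * L ≤ (N / L) * L := Nat.mul_le_mul_right L (by omega)
      have hNL : (N / L) * L ≤ N := Nat.div_mul_le_self N L
      have hsplit : (j + 2) * L = (j + 1) * L + L := by ring
      omega
    · intro x _ y _ hxy
      simp only at hxy
      have : (x + 1) * L = (y + 1) * L := by omega
      have := Nat.eq_of_mul_eq_mul_right hL this
      omega
  omega

lemma cnt_zero {P : ℕ → Prop} (h : ∀ k, ¬ P k) (N : ℕ) : cnt P N = 0 := by
  rw [cnt, Finset.filter_false_of_mem (fun k _ => h k), Finset.card_empty]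

lemma cnt_mono {P Q : ℕ → Prop} (h : ∀ k, P k → Q k) (N : ℕ) : cnt P N ≤ cnt Q N := by
  apply Finset.card_le_card
  intro k hk
  simp only [Finset.mem_filter] at hk ⊢
  exact ⟨hk.1, h k hk.2⟩

lemma cnt_dvd_le (d N : ℕ) {P : ℕ → Prop} (h : ∀ k, P k → d ∣ k) : cnt P N ≤ N / d := by
  rw [← Nat.Ioc_filter_dvd_card_eq_div N d, cnt]
  apply Finset.card_le_card
  intro k hk
  simp only [Finset.mem_filter, Finset.mem_Icc, Finset.mem_Ioc] at hk ⊢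
  exact ⟨⟨by omega, hk.1.2⟩, h k hk.2⟩

lemma exists_lt_of_solvable (P : ℕ → Prop) (L : ℕ) (hL : 0 < L) (h : ∃ x, P x)
    (hdown : ∀ k, L ≤ k → P k → P (k - L)) : ∃ r, r < L ∧ P r := by
  classical
  let r₀ := Nat.find h
  have hr₀ : P r₀ := Nat.find_spec h
  by_contra hcon
  push_neg at hcon
  have hge : L ≤ r₀ := by
    by_contra hlt
    exact hcon r₀ (by omega) hr₀
  have := hdown r₀ hge hr₀
  exact absurd this (Nat.find_min h (by omega))

lemma cnt_real_bounds (P : ℕ → Prop) (L : ℕ) (hL : 0 < L)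
    (huniq : ∀ x y, P x → P y → x % L = y % L)
    (hper : ∀ k, P k → P (k + L)) (r : ℕ) (hr : P r) (hrlt : r < L) (N : ℕ) :
    |(cnt P N : ℝ) - N / L| ≤ 2 := by
  have h1 : cnt P N ≤ N / L + 1 := cnt_le_of_unique P L hL huniq N
  have h2 : N / L ≤ cnt P N + 1 := cnt_ge P L hL hper r hr hrlt N
  have hc1 : ((N / L : ℕ) : ℝ) ≤ (N : ℝ) / L := Nat.cast_div_le
  have hc2 : (N : ℝ) / L < (N / L : ℕ) + 1 := by
    have hdm := Nat.div_add_mod N L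
    have hml := Nat.mod_lt N hL
    have hnat : N < (N / L + 1) * L := by
      have hh : (N / L + 1) * L = L * (N / L) + L := by ring
      omega
    have hcast : (N : ℝ) < ((N / L : ℕ) + 1) * L := by exact_mod_cast hnat
    rw [div_lt_iff₀ (by exact_mod_cast hL)]
    linarith
  have hcc1 : (cnt P N : ℝ) ≤ (N / L : ℕ) + 1 := by exact_mod_cast h1
  have hcc2 : ((N / L : ℕ) : ℝ) ≤ (cnt P N : ℝ) + 1 := by exact_mod_cast h2
  rw [abs_le]
  constructor <;> nlinarith

lemma sum_Icc_inv_sq_aux (D : ℕ) (hD : 1 ≤ D) :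
    ∀ N, D ≤ N → ∑ d ∈ Icc (D + 1) N, ((d : ℝ) ^ 2)⁻¹ ≤ 1 / D - 1 / N := by
  intro N hN
  induction N, hN using Nat.le_induction with
  | base => simp
  | succ N hDN ih =>
    rw [Finset.sum_Icc_succ_top (by omega)]
    have hN0 : (0 : ℝ) < N := by exact_mod_cast (by omega : 0 < N)
    have hN1 : (0 : ℝ) < (N : ℝ) + 1 := by linarith
    have hkey : (((N + 1 : ℕ) : ℝ) ^ 2)⁻¹ ≤ 1 / N - 1 / ((N : ℝ) + 1) := by
      push_cast
      have hle : (N : ℝ) * ((N : ℝ) + 1) ≤ ((N : ℝ) + 1) ^ 2 := by nlinarith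
      have h1 : (((N : ℝ) + 1) ^ 2)⁻¹ ≤ ((N : ℝ) * ((N : ℝ) + 1))⁻¹ :=
        inv_anti₀ (by positivity) hle
      have h2 : ((N : ℝ) * ((N : ℝ) + 1))⁻¹ = 1 / N - 1 / ((N : ℝ) + 1) := by
        field_simp
        ring
      linarith
    push_cast at hkey ⊢
    linarith [ih]

lemma sum_Icc_inv_sq_le (D : ℕ) (hD : 1 ≤ D) (N : ℕ) :
    ∑ d ∈ Icc (D + 1) N, ((d : ℝ) ^ 2)⁻¹ ≤ 1 / D := by
  rcases le_or_gt D N with h | h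
  · have hN : (0:ℝ) < N := by exact_mod_cast (by omega : 0 < N)
    have h0 : 1 / (N:ℝ) ≥ 0 := by positivity
    linarith [sum_Icc_inv_sq_aux D hD N h]
  · rw [show Icc (D+1) N = ∅ from Finset.Icc_eq_empty (by omega)]
    simp

lemma sum_Icc2_inv_sq_le (K : ℕ) : ∑ m ∈ Icc 2 K, ((m : ℝ) ^ 2)⁻¹ ≤ 3 / 4 := by
  rcases le_or_gt 2 K with h | h
  · have hset : Icc 2 K = insert 2 (Icc 3 K) := by
      ext x; simp only [Finset.mem_Icc, Finset.mem_insert]; omega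
    rw [hset, Finset.sum_insert (by simp)]
    have h2 : ∑ m ∈ Icc 3 K, ((m : ℝ) ^ 2)⁻¹ ≤ 1 / 2 := by
      have := sum_Icc_inv_sq_le 2 (by omega) K
      norm_num at this ⊢
      exact this
    norm_num
    linarith
  · rw [show Icc 2 K = ∅ from Finset.Icc_eq_empty (by omega)]
    norm_num

lemma crt_residue : ∀ a : ℕ, ∀ b : ℕ, 0 < b → Squarefree (Nat.gcd a b) →
    ∃ r : ℕ, 0 < r ∧ r % a = b % a ∧ ∀ p : ℕ, p.Prime → p ∣ a → ¬ p ^ 2 ∣ r := by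
  intro a
  induction a using Nat.strong_induction_on with
  | _ a IH =>
  intro b hb hgcd
  rcases Nat.lt_or_ge a 2 with ha2 | ha2
  · -- a = 0 or a = 1
    interval_cases a
    · -- a = 0 : gcd 0 b = b squarefree
      refine ⟨b, hb, rfl, fun p hp _ hp2 => ?_⟩
      rw [Nat.gcd_zero_left] at hgcd
      exact hp.not_isUnit (hgcd p (by rwa [← sq]))
    · -- a = 1
      refine ⟨b, hb, by simp, fun p hp hp1 _ => ?_⟩
      exact absurd (Nat.eq_one_of_dvd_one hp1) hp.one_lt.ne'
  · have ha0 : a ≠ 0 := by omega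
    set p := a.minFac with hpdef
    have hp : p.Prime := Nat.minFac_prime (by omega)
    have hpa : p ∣ a := Nat.minFac_dvd a
    set e := a.factorization p with hedef
    have he1 : 1 ≤ e := (Nat.Prime.factorization_pos_of_dvd hp ha0 hpa)
    set m := a / p ^ e with hmdef
    have ham : p ^ e * m = a := Nat.ordProj_mul_ordCompl_eq_self a p
    have hpm : ¬ p ∣ m := Nat.not_dvd_ordCompl hp ha0
    have hm0 : 0 < m := Nat.ordCompl_pos p ha0
    have hpe1 : 1 < p ^ e := Nat.one_lt_pow (by omega) hp.one_lt
    have hma : m < a := by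
      calc m = a / p ^ e := hmdef
      _ < a := Nat.div_lt_self (by omega) hpe1
    -- IH for m
    have hgcdm : Squarefree (Nat.gcd m b) :=
      hgcd.squarefree_of_dvd (Nat.gcd_dvd_gcd_of_dvd_left b ⟨p ^ e, by rw [← ham]; ring⟩)
    obtain ⟨r', hr'0, hr'b, hr'p⟩ := IH m hma b hb hgcdm
    -- choose s handling the prime p
    have hpsqb : p ^ 2 ∣ a → p ^ 2 ∣ b → False := by
      intro h1 h2
      exact hp.not_isUnit (hgcd p (by rw [← sq]; exact Nat.dvd_gcd h1 h2))
    obtain ⟨s, hs1, hs2⟩ : ∃ s : ℕ, s % p ^ e = b % p ^ e ∧ ¬ p ^ 2 ∣ s := by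
      rcases Nat.lt_or_ge e 2 with he2 | he2
      · have he : e = 1 := by omega
        by_cases hpb : p ∣ b
        · refine ⟨p, ?_, ?_⟩
          · rw [he, pow_one, Nat.mod_self]
            exact (Nat.mod_eq_zero_of_dvd hpb).symm
          · intro hcon
            have := Nat.le_of_dvd hp.pos hcon
            nlinarith [hp.one_lt]
        · refine ⟨b, rfl, fun hcon => hpb ?_⟩
          exact dvd_trans (dvd_pow_self p two_ne_zero) hcon
      · refine ⟨b, rfl, fun hcon => ?_⟩
        exact hpsqb (dvd_trans (pow_dvd_pow p he2) (by rw [← ham]; exact Dvd.intro m rfl)) hcon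
    -- CRT
    have hco : Nat.Coprime (p ^ max e 2) (m ^ 2) :=
      ((Nat.Prime.coprime_iff_not_dvd hp).mpr hpm).pow _ _
    obtain ⟨k, hk1, hk2⟩ := Nat.chineseRemainder hco s r'
    set n₁ := p ^ max e 2 with hn₁def
    set n₂ := m ^ 2 with hn₂def
    have hn₁0 : 0 < n₁ := Nat.pow_pos hp.pos
    have hn₂0 : 0 < n₂ := Nat.pow_pos hm0
    refine ⟨k + n₁ * n₂, by positivity, ?_, ?_⟩
    · -- r ≡ b [MOD a]
      have hrk₁ : (k + n₁ * n₂) % n₁ = k % n₁ := Nat.add_mul_mod_self_left k n₁ n₂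
      have hrk₂ : (k + n₁ * n₂) % n₂ = k % n₂ := by
        rw [mul_comm n₁ n₂]; exact Nat.add_mul_mod_self_left k n₂ n₁
      have h1 : (k + n₁ * n₂) ≡ b [MOD p ^ e] := by
        have : (k + n₁ * n₂) ≡ s [MOD n₁] := by
          unfold Nat.ModEq; rw [hrk₁]; exact hk1
        have h2 : (k + n₁ * n₂) ≡ s [MOD p ^ e] :=
          Nat.ModEq.of_dvd (pow_dvd_pow p (le_max_left e 2)) this
        exact h2.trans hs1
      have h2 : (k + n₁ * n₂) ≡ b [MOD m] := by
        have : (k + n₁ * n₂) ≡ r' [MOD n₂] := by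
          unfold Nat.ModEq; rw [hrk₂]; exact hk2
        have h3 : (k + n₁ * n₂) ≡ r' [MOD m] :=
          Nat.ModEq.of_dvd (dvd_pow_self m two_ne_zero) this
        exact h3.trans hr'b
      have hcoem : Nat.Coprime (p ^ e) m :=
        Nat.Coprime.pow_left _ ((Nat.Prime.coprime_iff_not_dvd hp).mpr hpm)
      have := (Nat.modEq_and_modEq_iff_modEq_mul hcoem).mp ⟨h1, h2⟩
      rwa [ham] at this
    · -- squarefree condition at primes of a
      intro q hq hqa hqr
      have : q ∣ p ^ e * m := by rwa [ham]
      rcases (Nat.Prime.dvd_mul hq).mp this with hq1 | hq2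
      · have hqp : q = p := (Nat.prime_dvd_prime_iff_eq hq hp).mp (hq.dvd_of_dvd_pow hq1)
        rw [hqp] at hqr
        have hdvd : p ^ 2 ∣ n₁ := pow_dvd_pow p (le_max_right e 2)
        have hmod : (k + n₁ * n₂) % p ^ 2 = s % p ^ 2 := by
          have h1 : (k + n₁ * n₂) ≡ s [MOD n₁] := by
            unfold Nat.ModEq; rw [Nat.add_mul_mod_self_left]; exact hk1
          exact Nat.ModEq.of_dvd hdvd h1
        apply hs2
        have hz : s % p ^ 2 = 0 := by
          rw [← hmod]; exact Nat.mod_eq_zero_of_dvd hqr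
        exact Nat.dvd_iff_mod_eq_zero.mpr hz
      · have hdvd : q ^ 2 ∣ n₂ := pow_dvd_pow_of_dvd hq2 2
        have hmod : (k + n₁ * n₂) ≡ r' [MOD q ^ 2] := by
          have h1 : (k + n₁ * n₂) ≡ r' [MOD n₂] := by
            unfold Nat.ModEq; rw [mul_comm n₁ n₂, Nat.add_mul_mod_self_left]; exact hk2
          exact Nat.ModEq.of_dvd hdvd h1
        apply hr'p q hq hq2
        have hz : r' % q ^ 2 = 0 := by
          rw [← hmod]; exact Nat.mod_eq_zero_of_dvd hqr
        exact Nat.dvd_iff_mod_eq_zero.mpr hz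

lemma Q_decomp (a b N : ℕ) :
    (cnt (fun k => k % a = b % a ∧ Squarefree k) N : ℤ)
      = ∑ d ∈ Icc 1 N, (μ d : ℤ) * (cnt (fun k => k % a = b % a ∧ d ^ 2 ∣ k) N : ℤ) := by
  have step1 : (cnt (fun k => k % a = b % a ∧ Squarefree k) N : ℤ)
      = ∑ k ∈ Icc 1 N, (if k % a = b % a ∧ Squarefree k then (1 : ℤ) else 0) := by
    rw [cnt, Finset.card_filter]
    push_cast
    apply Finset.sum_congr rfl
    intro k _
    split <;> simp
  rw [step1]
  have step2 : ∀ k ∈ Icc 1 N, (if k % a = b % a ∧ Squarefree k then (1 : ℤ) else 0)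
      = ∑ d ∈ Icc 1 N, (if k % a = b % a ∧ d ^ 2 ∣ k then (μ d : ℤ) else 0) := by
    intro k hk
    rw [Finset.mem_Icc] at hk
    have hk0 : k ≠ 0 := by omega
    by_cases hka : k % a = b % a
    · simp only [hka, true_and]
      rw [← moebius_indicator k hk0]
      apply Finset.sum_subset
      · intro d hd
        rw [Nat.mem_divisors] at hd
        rw [Finset.mem_Icc]
        have h1 := Nat.pos_of_dvd_of_pos hd.1 (by omega)
        have h2 := Nat.le_of_dvd (by omega) hd.1
        omega
      · intro d _ hd
        rw [if_neg]
        intro hd2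
        exact hd (Nat.mem_divisors.mpr ⟨dvd_trans (dvd_pow_self d two_ne_zero) hd2, hk0⟩)
    · simp only [hka, false_and, if_neg, not_false_iff]
      symm
      apply Finset.sum_eq_zero
      intro d _
      simp [hka]
  rw [Finset.sum_congr rfl step2, Finset.sum_comm]
  apply Finset.sum_congr rfl
  intro d _
  rw [cnt, Finset.card_filter]
  push_cast
  rw [Finset.mul_sum]
  apply Finset.sum_congr rfl
  intro k _
  split <;> simp

noncomputable def lc (a d : ℕ) : ℕ := Nat.lcm (d ^ 2) a
noncomputable def tt (a b d : ℕ) : ℝ := if ∃ x, x % a = b % a ∧ d ^ 2 ∣ x then 1 else 0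
noncomputable def cc (a b d : ℕ) : ℝ := if d = 0 then 0 else (μ d : ℝ) * tt a b d / lc a d

lemma abs_moebius_real_le_one (d : ℕ) : |(μ d : ℝ)| ≤ 1 := by
  by_cases h : Squarefree d
  · have := ArithmeticFunction.abs_moebius_eq_one_of_squarefree h
    have : |(μ d : ℝ)| = 1 := by
      rw [← Int.cast_abs, this]; norm_num
    rw [this]
  · rw [ArithmeticFunction.moebius_eq_zero_of_not_squarefree h]
    norm_num

lemma lc_pos {a : ℕ} (ha : 0 < a) (d : ℕ) (hd : 1 ≤ d) : 0 < lc a d :=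
  Nat.pos_of_ne_zero (Nat.lcm_ne_zero (by positivity) (by omega))

lemma sq_le_lc {a : ℕ} (ha : 0 < a) (d : ℕ) (hd : 1 ≤ d) : d ^ 2 ≤ lc a d :=
  Nat.le_of_dvd (lc_pos ha d hd) (Nat.dvd_lcm_left _ _)

/-- modular uniqueness for the pair of conditions -/
lemma uniq_mod_lc {a b : ℕ} (ha : 0 < a) (d : ℕ) :
    ∀ x y, (x % a = b % a ∧ d ^ 2 ∣ x) → (y % a = b % a ∧ d ^ 2 ∣ y) →
      x % lc a d = y % lc a d := by
  intro x y hx hy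
  have hd2 : ((d ^ 2 : ℕ) : ℤ) ∣ (y : ℤ) - (x : ℤ) := by
    obtain ⟨u, hu⟩ := hx.2; obtain ⟨v, hv⟩ := hy.2
    exact ⟨(v : ℤ) - u, by push_cast [hu, hv]; ring⟩
  have hha : ((a : ℕ) : ℤ) ∣ (y : ℤ) - (x : ℤ) :=
    (Nat.modEq_iff_dvd (n := a)).mp (hx.1.trans hy.1.symm)
  have hlcm : ((Int.lcm ((d ^ 2 : ℕ) : ℤ) ((a : ℕ) : ℤ) : ℕ) : ℤ) ∣ (y : ℤ) - (x : ℤ) := by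
    rw [Int.coe_lcm]; exact lcm_dvd hd2 hha
  have : ((lc a d : ℕ) : ℤ) ∣ (y : ℤ) - (x : ℤ) := hlcm
  exact (Nat.modEq_iff_dvd (n := lc a d)).mpr this

lemma estimate_A {a b : ℕ} (ha : 0 < a) (d : ℕ) (hd : 1 ≤ d) (N : ℕ) :
    |(cnt (fun k => k % a = b % a ∧ d ^ 2 ∣ k) N : ℝ) - tt a b d * N / lc a d| ≤ 2 := by
  by_cases hsol : ∃ x, x % a = b % a ∧ d ^ 2 ∣ x
  · have ht : tt a b d = 1 := if_pos hsol
    rw [ht, one_mul]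
    have hL : 0 < lc a d := lc_pos ha d hd
    have hdvdL1 : d ^ 2 ∣ lc a d := Nat.dvd_lcm_left _ _
    have hdvdL2 : a ∣ lc a d := Nat.dvd_lcm_right _ _
    have hper : ∀ k, (k % a = b % a ∧ d ^ 2 ∣ k) →
        ((k + lc a d) % a = b % a ∧ d ^ 2 ∣ k + lc a d) := by
      intro k ⟨h1, h2⟩
      refine ⟨?_, dvd_add h2 hdvdL1⟩
      obtain ⟨c, hc⟩ := hdvdL2
      rw [hc, Nat.add_mul_mod_self_left, h1]
    have hdown : ∀ k, lc a d ≤ k → (k % a = b % a ∧ d ^ 2 ∣ k) →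
        ((k - lc a d) % a = b % a ∧ d ^ 2 ∣ k - lc a d) := by
      intro k hLk ⟨h1, h2⟩
      refine ⟨?_, Nat.dvd_sub h2 hdvdL1⟩
      have hmod : k - lc a d ≡ k [MOD a] := by
        apply (Nat.modEq_iff_dvd' (Nat.sub_le k (lc a d))).mpr
        rw [Nat.sub_sub_self hLk]
        exact hdvdL2
      rw [show (k - lc a d) % a = k % a from hmod, h1]
    obtain ⟨r, hrlt, hr⟩ := exists_lt_of_solvable _ (lc a d) hL hsol hdown
    exact cnt_real_bounds _ (lc a d) hL (uniq_mod_lc ha d) hper r hr hrlt N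
  · have ht : tt a b d = 0 := if_neg hsol
    push_neg at hsol
    have h0 : cnt (fun k => k % a = b % a ∧ d ^ 2 ∣ k) N = 0 :=
      cnt_zero (by intro k hk; exact (hsol k hk.1) hk.2) N
    rw [h0, ht]
    norm_num

lemma tt_nonneg (a b d : ℕ) : 0 ≤ tt a b d := by unfold tt; split <;> norm_num
lemma tt_le_one (a b d : ℕ) : tt a b d ≤ 1 := by unfold tt; split <;> norm_num

lemma abs_cc_le {a : ℕ} (ha : 0 < a) (b d : ℕ) : |cc a b d| ≤ ((d : ℝ) ^ 2)⁻¹ := by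
  rcases Nat.eq_zero_or_pos d with rfl | hd
  · simp [cc]
  · rw [cc, if_neg (by omega)]
    have hL : (0 : ℝ) < lc a d := by exact_mod_cast lc_pos ha d hd
    have hsq : ((d : ℝ) ^ 2) ≤ lc a d := by exact_mod_cast sq_le_lc ha d hd
    have hd0 : (0 : ℝ) < (d : ℝ) ^ 2 := by
      have : (0 : ℝ) < (d : ℝ) := by exact_mod_cast hd
      positivity
    rw [abs_div, abs_mul, abs_of_nonneg hL.le, abs_of_nonneg (tt_nonneg a b d)]
    have h1 : |(μ d : ℝ)| * tt a b d ≤ 1 :=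
      mul_le_one₀ (abs_moebius_real_le_one d) (tt_nonneg a b d) (tt_le_one a b d)
    calc |(μ d : ℝ)| * tt a b d / (lc a d : ℝ) ≤ 1 / (lc a d : ℝ) := by
          gcongr
    _ ≤ 1 / ((d : ℝ) ^ 2) := by apply one_div_le_one_div_of_le hd0 hsq
    _ = ((d : ℝ) ^ 2)⁻¹ := one_div _

lemma summable_cc {a : ℕ} (ha : 0 < a) (b : ℕ) : Summable (cc a b) := by
  apply Summable.of_abs
  apply Summable.of_nonneg_of_le (fun d => abs_nonneg _) (fun d => abs_cc_le ha b d)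
  have h := Real.summable_one_div_nat_pow.mpr (by norm_num : 1 < 2)
  simpa [one_div] using h

lemma A_le_tail {a b : ℕ} (d N : ℕ) (hd : 1 ≤ d) (hN : 1 ≤ N) :
    (cnt (fun k => k % a = b % a ∧ d ^ 2 ∣ k) N : ℝ) / N ≤ ((d : ℝ) ^ 2)⁻¹ := by
  have h1 : cnt (fun k => k % a = b % a ∧ d ^ 2 ∣ k) N ≤ N / d ^ 2 :=
    cnt_dvd_le (d ^ 2) N (fun k hk => hk.2)
  have h2 : ((N / d ^ 2 : ℕ) : ℝ) ≤ (N : ℝ) / (d : ℝ) ^ 2 := by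
    have := Nat.cast_div_le (α := ℝ) (m := N) (n := d ^ 2)
    push_cast at this
    exact this
  have hNpos : (0 : ℝ) < N := by exact_mod_cast hN
  have hdpos : (0 : ℝ) < (d : ℝ) ^ 2 := by
    have : (0:ℝ) < (d:ℝ) := by exact_mod_cast hd
    positivity
  rw [div_le_iff₀ hNpos]
  calc (cnt (fun k => k % a = b % a ∧ d ^ 2 ∣ k) N : ℝ) ≤ (N : ℝ) / (d : ℝ) ^ 2 := by
        exact_mod_cast le_trans (by exact_mod_cast h1) h2
  _ = ((d : ℝ) ^ 2)⁻¹ * N := by field_simp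

lemma tendsto_main {a b : ℕ} (ha : 0 < a) :
    Tendsto (fun N : ℕ => (cnt (fun k => k % a = b % a ∧ Squarefree k) N : ℝ) / N)
      atTop (nhds (∑' d, cc a b d)) := by
  set S := ∑' d, cc a b d with hS
  rw [Metric.tendsto_atTop]
  intro ε hε
  have hps := (summable_cc ha b).hasSum.tendsto_sum_nat
  rw [Metric.tendsto_atTop] at hps
  obtain ⟨D₁, hD₁⟩ := hps (ε / 4) (by positivity)
  set D : ℕ := max D₁ (⌈(4 : ℝ) / ε⌉₊ + 1) with hDdef
  have hD1 : 1 ≤ D := le_trans (by omega) (le_max_right _ _)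
  have hDinv : 1 / (D : ℝ) < ε / 4 := by
    have h1 : (4 : ℝ) / ε < (⌈(4 : ℝ) / ε⌉₊ + 1 : ℕ) := by
      push_cast
      exact lt_of_le_of_lt (Nat.le_ceil _) (by norm_num)
    have h2 : (4 : ℝ) / ε < (D : ℝ) := by
      refine lt_of_lt_of_le h1 ?_
      exact_mod_cast Nat.cast_le.mpr (le_max_right D₁ (⌈(4 : ℝ) / ε⌉₊ + 1))
    have hD0 : (0 : ℝ) < D := lt_trans (by positivity) h2
    rw [div_lt_iff₀ hD0]
    rw [div_lt_iff₀ hε] at h2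
    nlinarith
  -- partial sum close
  have hpart : |∑ d ∈ range (D + 1), cc a b d - S| < ε / 4 := by
    have := hD₁ (D + 1) (by omega)
    rwa [Real.dist_eq] at this
  -- choose N₀
  obtain ⟨N₀', hN₀'⟩ := exists_nat_gt ((8 * (D : ℝ) + 8) / ε)
  set N₀ : ℕ := max (max D 1) N₀' with hN₀def
  refine ⟨N₀, fun N hN => ?_⟩
  have hND : D ≤ N := le_trans (le_trans (le_max_left D 1) (le_max_left _ N₀')) hN
  have hN1 : 1 ≤ N := le_trans (le_trans (le_max_right D 1) (le_max_left _ N₀')) hN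
  have hNR : (0 : ℝ) < N := by exact_mod_cast hN1
  have hNbig : (8 * (D : ℝ) + 8) / ε < N := by
    refine lt_of_lt_of_le hN₀' ?_
    exact_mod_cast le_trans (le_max_right (max D 1) N₀') hN
  have h2DN : 2 * (D : ℝ) / N < ε / 4 := by
    rw [div_lt_iff₀ hNR]
    rw [div_lt_iff₀ hε] at hNbig
    nlinarith
  -- decomposition
  have hdec : (cnt (fun k => k % a = b % a ∧ Squarefree k) N : ℝ)
      = ∑ d ∈ Icc 1 N, (μ d : ℝ) * (cnt (fun k => k % a = b % a ∧ d ^ 2 ∣ k) N : ℝ) := by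
    have := Q_decomp a b N
    have := congrArg (fun z : ℤ => (z : ℝ)) this
    push_cast at this
    exact this
  -- split the sum
  have hIcc : Icc 1 N = Ioc 0 N := by ext x; simp only [Finset.mem_Icc, Finset.mem_Ioc]; omega
  have hIcc2 : Icc 1 D = Ioc 0 D := by ext x; simp only [Finset.mem_Icc, Finset.mem_Ioc]; omega
  have hIcc3 : Icc (D + 1) N = Ioc D N := by ext x; simp only [Finset.mem_Icc, Finset.mem_Ioc]; omega
  set f : ℕ → ℝ := fun d => (μ d : ℝ) * (cnt (fun k => k % a = b % a ∧ d ^ 2 ∣ k) N : ℝ)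
  have hsplit : ∑ d ∈ Icc 1 N, f d = ∑ d ∈ Icc 1 D, f d + ∑ d ∈ Icc (D + 1) N, f d := by
    rw [hIcc, hIcc2, hIcc3]
    exact (Finset.sum_Ioc_consecutive f (Nat.zero_le D) hND).symm
  -- sum over Icc 1 D of cc = sum over range (D+1)
  have hccsum : ∑ d ∈ range (D + 1), cc a b d = ∑ d ∈ Icc 1 D, cc a b d := by
    have hins : range (D + 1) = insert 0 (Icc 1 D) := by
      ext x; simp [Nat.lt_succ_iff]; omega
    rw [hins, Finset.sum_insert (by simp)]
    simp [cc]
  -- the three error bounds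
  have hbound1 : |∑ d ∈ Icc 1 D, (f d / N - cc a b d)| ≤ 2 * D / N := by
    calc |∑ d ∈ Icc 1 D, (f d / N - cc a b d)| ≤ ∑ d ∈ Icc 1 D, |f d / N - cc a b d| :=
          Finset.abs_sum_le_sum_abs _ _
    _ ≤ ∑ d ∈ Icc 1 D, (2 : ℝ) / (N : ℝ) := by
        apply Finset.sum_le_sum
        intro d hd
        rw [Finset.mem_Icc] at hd
        have hd1 : 1 ≤ d := hd.1
        have hcc : cc a b d = (μ d : ℝ) * tt a b d / lc a d := by
          rw [cc, if_neg (by omega)]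
        have hL : (0 : ℝ) < lc a d := by exact_mod_cast lc_pos ha d hd1
        have key : f d / N - cc a b d
            = (μ d : ℝ) * ((cnt (fun k => k % a = b % a ∧ d ^ 2 ∣ k) N : ℝ)
                - tt a b d * N / lc a d) / N := by
          rw [hcc]
          field_simp
          ring
        rw [key, abs_div, abs_mul, abs_of_nonneg hNR.le]
        have h1 := abs_moebius_real_le_one d
        have h2 := estimate_A (b := b) ha d hd1 N
        have h3 : |(μ d : ℝ)| * |(cnt (fun k => k % a = b % a ∧ d ^ 2 ∣ k) N : ℝ)
            - tt a b d * N / lc a d| ≤ 2 := by nlinarith [abs_nonneg ((cnt (fun k => k % a = b % a ∧ d ^ 2 ∣ k) N : ℝ) - tt a b d * N / lc a d)]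
        gcongr
    _ = (D : ℝ) * ((2:ℝ) / (N:ℝ)) := by
        rw [Finset.sum_const, Nat.card_Icc]
        simp
    _ = 2 * D / N := by ring
  have hbound2 : |∑ d ∈ Icc (D + 1) N, f d / N| ≤ 1 / D := by
    calc |∑ d ∈ Icc (D + 1) N, f d / N| ≤ ∑ d ∈ Icc (D + 1) N, |f d / N| :=
          Finset.abs_sum_le_sum_abs _ _
    _ ≤ ∑ d ∈ Icc (D + 1) N, ((d : ℝ) ^ 2)⁻¹ := by
        apply Finset.sum_le_sum
        intro d hd
        rw [Finset.mem_Icc] at hd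
        have hd1 : 1 ≤ d := by omega
        rw [abs_div, abs_mul, abs_of_nonneg hNR.le, Nat.abs_cast]
        have h1 := abs_moebius_real_le_one d
        have h2 := A_le_tail (a := a) (b := b) d N hd1 hN1
        have hAnn : (0:ℝ) ≤ (cnt (fun k => k % a = b % a ∧ d ^ 2 ∣ k) N : ℝ) / N := by positivity
        calc |(μ d : ℝ)| * (cnt (fun k => k % a = b % a ∧ d ^ 2 ∣ k) N : ℝ) / N
            = |(μ d : ℝ)| * ((cnt (fun k => k % a = b % a ∧ d ^ 2 ∣ k) N : ℝ) / N) := by ring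
        _ ≤ 1 * ((d : ℝ) ^ 2)⁻¹ := by
            apply mul_le_mul h1 h2 hAnn zero_le_one
        _ = ((d : ℝ) ^ 2)⁻¹ := one_mul _
    _ ≤ 1 / D := sum_Icc_inv_sq_le D hD1 N
  -- assemble
  rw [Real.dist_eq]
  have hQN : (cnt (fun k => k % a = b % a ∧ Squarefree k) N : ℝ) / N
      = ∑ d ∈ Icc 1 D, f d / N + ∑ d ∈ Icc (D + 1) N, f d / N := by
    rw [hdec]
    rw [show (∑ d ∈ Icc 1 N, f d) = ∑ d ∈ Icc 1 D, f d + ∑ d ∈ Icc (D + 1) N, f d from hsplit]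
    rw [add_div, Finset.sum_div, Finset.sum_div]
  rw [hQN]
  have step : |∑ d ∈ Icc 1 D, f d / N + ∑ d ∈ Icc (D + 1) N, f d / N - S|
      ≤ |∑ d ∈ Icc 1 D, (f d / N - cc a b d)| + |∑ d ∈ Icc (D + 1) N, f d / N|
        + |∑ d ∈ range (D + 1), cc a b d - S| := by
    have heq : ∑ d ∈ Icc 1 D, f d / N + ∑ d ∈ Icc (D + 1) N, f d / N - S
        = (∑ d ∈ Icc 1 D, (f d / N - cc a b d)) + (∑ d ∈ Icc (D + 1) N, f d / N)
          + (∑ d ∈ range (D + 1), cc a b d - S) := by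
      rw [Finset.sum_sub_distrib, hccsum]
      ring
    rw [heq]
    exact (abs_add_le _ _).trans (by gcongr; exact abs_add_le _ _)
  calc |∑ d ∈ Icc 1 D, f d / N + ∑ d ∈ Icc (D + 1) N, f d / N - S|
      ≤ |∑ d ∈ Icc 1 D, (f d / N - cc a b d)| + |∑ d ∈ Icc (D + 1) N, f d / N|
        + |∑ d ∈ range (D + 1), cc a b d - S| := step
  _ < 2 * D / N + 1 / D + ε / 4 := by
      have := hbound1; have := hbound2
      linarith
  _ < ε / 4 + ε / 4 + ε / 4 := by linarith
  _ < ε := by linarith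

lemma cnt_split (P Q : ℕ → Prop) (N : ℕ) :
    cnt P N ≤ cnt (fun k => P k ∧ Q k) N + cnt (fun k => P k ∧ ¬ Q k) N := by
  unfold cnt
  refine le_trans (Finset.card_le_card ?_) (Finset.card_union_le _ _)
  intro k hk
  simp only [Finset.mem_filter, Finset.mem_union] at hk ⊢
  by_cases hq : Q k
  · exact Or.inl ⟨hk.1, hk.2, hq⟩
  · exact Or.inr ⟨hk.1, hk.2, hq⟩

lemma eventually_lower {a b : ℕ} (ha : 0 < a) (hb : 0 < b) (hgcd : Squarefree (Nat.gcd a b)) :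
    ∃ c₀ : ℝ, 0 < c₀ ∧ ∀ᶠ N : ℕ in atTop,
      c₀ * N ≤ (cnt (fun k => k % a = b % a ∧ Squarefree k) N : ℝ) := by
  obtain ⟨r, hr0, hrb, hrp⟩ := crt_residue a b hb hgcd
  set M := a ^ 2 with hMdef
  have hM0 : 0 < M := by positivity
  have haM : a ∣ M := dvd_pow_self a two_ne_zero
  have hMR : (0 : ℝ) < M := by exact_mod_cast hM0
  refine ⟨(8 * (M : ℝ))⁻¹, by positivity, ?_⟩
  rw [Filter.eventually_atTop]
  refine ⟨(16 * M) ^ 2 + 32 * M, fun N hN => ?_⟩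
  set K := Nat.sqrt N with hKdef
  have hN1 : 1 ≤ N := by nlinarith [hM0]
  have hNR : (0 : ℝ) < N := by exact_mod_cast hN1
  -- K bounds
  have hK16 : 16 * M ≤ K := Nat.le_sqrt.mpr (by nlinarith)
  have hKK : K * K ≤ N := by
    have := Nat.sqrt_le' N
    nlinarith [this]
  have hKreal : (K : ℝ) ≤ (N : ℝ) / (16 * M) := by
    rw [le_div_iff₀ (by positivity)]
    have h1 : (K : ℝ) * (16 * M) ≤ (K : ℝ) * K := by
      have : (16 * M : ℝ) ≤ K := by exact_mod_cast hK16
      nlinarith [Nat.cast_nonneg (α := ℝ) K]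
    have h2 : (K : ℝ) * K ≤ N := by exact_mod_cast hKK
    linarith
  have h2small : (2 : ℝ) ≤ (N : ℝ) / (16 * M) := by
    rw [le_div_iff₀ (by positivity)]
    have : (32 * M : ℕ) ≤ N := by omega
    have : (32 * (M:ℝ)) ≤ N := by exact_mod_cast this
    linarith
  -- total count
  have htotal : |(cnt (fun k => k % M = r % M) N : ℝ) - N / M| ≤ 2 := by
    refine cnt_real_bounds (fun k => k % M = r % M) M hM0
      (fun x y hx hy => hx.trans hy.symm)
      (fun k hk => by show (k + M) % M = r % M; rw [Nat.add_mod_right]; exact hk) (r % M)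
      (Nat.mod_mod_of_dvd r (dvd_refl M)) (Nat.mod_lt _ hM0) N
  -- subset of Q-count
  have hmono : cnt (fun k => k % M = r % M ∧ Squarefree k) N
      ≤ cnt (fun k => k % a = b % a ∧ Squarefree k) N := by
    apply cnt_mono
    rintro k ⟨hk1, hk2⟩
    refine ⟨?_, hk2⟩
    have : k ≡ r [MOD a] := Nat.ModEq.of_dvd haM hk1
    rw [show k % a = r % a from this, hrb]
  -- splitting
  have hsplit := cnt_split (fun k => k % M = r % M) Squarefree N
  -- bad count
  set TP := (Icc 2 K).filter (fun p => p.Prime ∧ ¬ p ∣ a) with hTP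
  have hbad : cnt (fun k => k % M = r % M ∧ ¬ Squarefree k) N
      ≤ ∑ p ∈ TP, cnt (fun k => k % M = r % M ∧ p ^ 2 ∣ k) N := by
    unfold cnt
    refine le_trans (Finset.card_le_card ?_) Finset.card_biUnion_le
    intro k hk
    simp only [Finset.mem_filter, Finset.mem_Icc] at hk
    obtain ⟨⟨hk1, hkN⟩, hkr, hknsq⟩ := hk
    obtain ⟨p, hp, hpk⟩ := by
      have := (Nat.squarefree_iff_prime_squarefree (n := k)).not.mp hknsq
      push_neg at this
      exact this
    have hp2k : p ^ 2 ∣ k := by rwa [sq]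
    have hpa : ¬ p ∣ a := by
      intro hpa
      have hp2M : p ^ 2 ∣ M := pow_dvd_pow_of_dvd hpa 2
      have hkrmod : k ≡ r [MOD p ^ 2] := Nat.ModEq.of_dvd hp2M hkr
      have : r % p ^ 2 = 0 := by
        rw [← hkrmod]
        exact Nat.mod_eq_zero_of_dvd hp2k
      exact hrp p hp hpa (Nat.dvd_iff_mod_eq_zero.mpr this)
    have hpK : p ≤ K := Nat.le_sqrt.mpr (le_trans (Nat.le_of_dvd (by omega) hpk) hkN)
    rw [Finset.mem_biUnion]
    refine ⟨p, ?_, ?_⟩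
    · rw [hTP, Finset.mem_filter, Finset.mem_Icc]
      exact ⟨⟨hp.two_le, hpK⟩, hp, hpa⟩
    · simp only [Finset.mem_filter, Finset.mem_Icc]
      exact ⟨⟨hk1, hkN⟩, hkr, hp2k⟩
  -- individual bad bound
  have hbadterm : ∀ p ∈ TP, (cnt (fun k => k % M = r % M ∧ p ^ 2 ∣ k) N : ℝ)
      ≤ (N : ℝ) / M * ((p : ℝ) ^ 2)⁻¹ + 1 := by
    intro p hpTP
    rw [hTP, Finset.mem_filter, Finset.mem_Icc] at hpTP
    obtain ⟨⟨hp2, hpK⟩, hp, hpa⟩ := hpTP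
    have hL0 : 0 < p ^ 2 * M := by positivity
    have hco : Nat.Coprime (p ^ 2) M :=
      Nat.Coprime.pow _ _ ((Nat.Prime.coprime_iff_not_dvd hp).mpr hpa)
    have huniq : ∀ x y, (x % M = r % M ∧ p ^ 2 ∣ x) → (y % M = r % M ∧ p ^ 2 ∣ y) →
        x % (p ^ 2 * M) = y % (p ^ 2 * M) := by
      intro x y hx hy
      have h1 : x ≡ y [MOD p ^ 2] := by
        unfold Nat.ModEq
        rw [Nat.mod_eq_zero_of_dvd hx.2, Nat.mod_eq_zero_of_dvd hy.2]
      have h2 : x ≡ y [MOD M] := hx.1.trans hy.1.symm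
      exact (Nat.modEq_and_modEq_iff_modEq_mul hco).mp ⟨h1, h2⟩
    have h1 := cnt_le_of_unique _ (p ^ 2 * M) hL0 huniq N
    have h2 : ((N / (p ^ 2 * M) : ℕ) : ℝ) ≤ (N : ℝ) / ((p : ℝ) ^ 2 * M) := by
      have := Nat.cast_div_le (α := ℝ) (m := N) (n := p ^ 2 * M)
      push_cast at this
      exact this
    have hpR : (0:ℝ) < (p:ℝ)^2 := by
      have : (0:ℝ) < p := by exact_mod_cast hp.pos
      positivity
    calc (cnt (fun k => k % M = r % M ∧ p ^ 2 ∣ k) N : ℝ)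
        ≤ ((N / (p ^ 2 * M) : ℕ) : ℝ) + 1 := by exact_mod_cast h1
    _ ≤ (N : ℝ) / ((p : ℝ) ^ 2 * M) + 1 := by linarith
    _ = (N : ℝ) / M * ((p : ℝ) ^ 2)⁻¹ + 1 := by field_simp
  -- sum it
  have hbadsum : ((cnt (fun k => k % M = r % M ∧ ¬ Squarefree k) N : ℕ) : ℝ)
      ≤ (N : ℝ) / M * (3 / 4) + K := by
    have h0 : ((cnt (fun k => k % M = r % M ∧ ¬ Squarefree k) N : ℕ) : ℝ)
        ≤ ∑ p ∈ TP, (cnt (fun k => k % M = r % M ∧ p ^ 2 ∣ k) N : ℝ) := by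
      exact_mod_cast hbad
    refine le_trans h0 (le_trans (Finset.sum_le_sum hbadterm) ?_)
    rw [Finset.sum_add_distrib, Finset.sum_const, ← Finset.mul_sum]
    have hcard : (TP.card : ℝ) ≤ K := by
      have h1 : TP.card ≤ (Icc 2 K).card := Finset.card_le_card (Finset.filter_subset _ _)
      have h2 : (Icc 2 K).card ≤ K := by rw [Nat.card_Icc]; omega
      exact_mod_cast le_trans h1 h2
    have hsum : ∑ p ∈ TP, ((p : ℝ) ^ 2)⁻¹ ≤ 3 / 4 := by
      refine le_trans (Finset.sum_le_sum_of_subset_of_nonneg (Finset.filter_subset _ _) ?_)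
        (sum_Icc2_inv_sq_le K)
      intro i _ _
      positivity
    have hNM : (0:ℝ) ≤ (N:ℝ)/M := by positivity
    have := mul_le_mul_of_nonneg_left hsum hNM
    simp only [nsmul_eq_mul]
    linarith
  -- assemble
  have hQ : ((cnt (fun k => k % a = b % a ∧ Squarefree k) N : ℕ) : ℝ)
      ≥ ((cnt (fun k => k % M = r % M) N : ℕ) : ℝ)
        - ((cnt (fun k => k % M = r % M ∧ ¬ Squarefree k) N : ℕ) : ℝ) := by
    have h1 : ((cnt (fun k => k % M = r % M ∧ Squarefree k) N : ℕ) : ℝ)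
        ≤ (cnt (fun k => k % a = b % a ∧ Squarefree k) N : ℝ) := by exact_mod_cast hmono
    have h2 : ((cnt (fun k => k % M = r % M) N : ℕ) : ℝ)
        ≤ ((cnt (fun k => k % M = r % M ∧ Squarefree k) N : ℕ) : ℝ)
          + ((cnt (fun k => k % M = r % M ∧ ¬ Squarefree k) N : ℕ) : ℝ) := by
      exact_mod_cast hsplit
    linarith
  have habs := abs_le.mp htotal
  calc (8 * (M : ℝ))⁻¹ * N
      = (N : ℝ) / M * (1 / 4) - (N : ℝ) / (16 * M) - (N : ℝ) / (16 * M) := by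
        field_simp; ring
  _ ≤ (N : ℝ) / M - 2 - ((N : ℝ) / M * (3 / 4) + K) := by
      have : (K : ℝ) ≤ (N : ℝ) / (16 * M) := hKreal
      linarith
  _ ≤ (cnt (fun k => k % a = b % a ∧ Squarefree k) N : ℝ) := by linarith

end Stmt16

open Filter Stmt16

/-- If gcd(a,b) is square-free, the set of square-free natural numbers
congruent to b modulo a has positive asymptotic density; in particular it is infinite. -/
theorem stmt_16 (a b : ℕ) (ha : 0 < a) (hb : 0 < b) (hgcd : Squarefree (Nat.gcd a b)) :
    (∃ d : ℝ, 0 < d ∧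
      Tendsto (fun n : ℕ =>
        ((Finset.range (n + 1)).filter (fun k => Squarefree k ∧ k % a = b % a)).card / (n : ℝ))
        atTop (nhds d)) ∧
    {k : ℕ | Squarefree k ∧ k % a = b % a}.Infinite := by
  classical
  have hcard : ∀ n : ℕ,
      ((Finset.range (n + 1)).filter (fun k => Squarefree k ∧ k % a = b % a)).card
        = cnt (fun k => k % a = b % a ∧ Squarefree k) n := by
    intro n
    unfold cnt
    congr 1
    ext k
    simp only [Finset.mem_filter, Finset.mem_range, Finset.mem_Icc, Nat.lt_succ_iff]
    constructor
    · rintro ⟨hk, hsq, hm⟩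
      exact ⟨⟨Nat.one_le_iff_ne_zero.mpr hsq.ne_zero, hk⟩, hm, hsq⟩
    · rintro ⟨⟨_, hk⟩, hm, hsq⟩
      exact ⟨hk, hsq, hm⟩
  have hfun : (fun n : ℕ =>
      (((Finset.range (n + 1)).filter (fun k => Squarefree k ∧ k % a = b % a)).card : ℝ) / (n : ℝ))
      = fun n : ℕ => (cnt (fun k => k % a = b % a ∧ Squarefree k) n : ℝ) / n := by
    funext n
    rw [hcard n]
  have hT : Tendsto (fun n : ℕ =>
      (((Finset.range (n + 1)).filter (fun k => Squarefree k ∧ k % a = b % a)).card : ℝ) / (n : ℝ))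
      atTop (nhds (∑' d, cc a b d)) := by
    rw [hfun]
    exact tendsto_main ha
  obtain ⟨c₀, hc₀, hev⟩ := eventually_lower ha hb hgcd
  have hev2 : ∀ᶠ N : ℕ in atTop, c₀ ≤ (cnt (fun k => k % a = b % a ∧ Squarefree k) N : ℝ) / N := by
    filter_upwards [hev, Filter.eventually_ge_atTop 1] with N hN hN1
    have hNR : (0 : ℝ) < N := by exact_mod_cast hN1
    rw [le_div_iff₀ hNR]
    linarith
  have hTc : Tendsto (fun n : ℕ => (cnt (fun k => k % a = b % a ∧ Squarefree k) n : ℝ) / n)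
      atTop (nhds (∑' d, cc a b d)) := tendsto_main ha
  have hpos : 0 < ∑' d, cc a b d := lt_of_lt_of_le hc₀ (ge_of_tendsto hTc hev2)
  refine ⟨⟨∑' d, cc a b d, hpos, hT⟩, ?_⟩
  by_contra hfin
  rw [Set.not_infinite] at hfin
  set C := hfin.toFinset.card with hC
  have hbound : ∀ n : ℕ, (cnt (fun k => k % a = b % a ∧ Squarefree k) n : ℝ) / n ≤ (C : ℝ) / n := by
    intro n
    rcases Nat.eq_zero_or_pos n with rfl | hn
    · simp
    · have hNR : (0 : ℝ) < n := by exact_mod_cast hn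
      gcongr
      rw [cnt, hC]
      exact_mod_cast Finset.card_le_card (fun k hk => by
        simp only [Finset.mem_filter] at hk
        exact (Set.Finite.mem_toFinset hfin).mpr ⟨hk.2.2, hk.2.1⟩)
  have h0 := tendsto_const_div_atTop_nhds_zero_nat (C : ℝ)
  have hle : (∑' d, cc a b d) ≤ 0 := le_of_tendsto_of_tendsto' hTc h0 hbound
  linarith
end
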